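/- arXiv:0911.2151 — 6 statements merged into one kernel-verified Lean document; each statement's English description precedes it below -/
import Mathlib

section
/- Let λ be an uncountable cardinal with 2^λ = λ⁺, and let σ < λ be an infinite regular cardinal such that λ^σ = λ. Then ◊*_{E^{λ⁺}_σ} holds. -/
noncomputable section

namespace DiamondSurvey

open Cardinal

/-- `λ⁺`, the successor cardinal of `lam`, identified with its initial ordinal. -/
def succOrd (lam : Cardinal.{0}) : Ordinal.{0} :=
  (Order.succ lam).ord

/-- `λ⁺⁺`, identified with its initial ordinal. -/
def succ2Ord (lam : Cardinal.{0}) : Ordinal.{0} :=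
  (Order.succ (Order.succ lam)).ord

/-- `C` is a club in `κ`: a subset of `κ` that is unbounded in `κ` and closed under
suprema of its nonempty bounded subsets. -/
def IsClubIn (C : Set Ordinal.{0}) (κ : Ordinal.{0}) : Prop :=
  C ⊆ Set.Iio κ ∧ (∀ α < κ, ∃ β ∈ C, α ≤ β) ∧
    ∀ s ⊆ C, s.Nonempty → sSup s < κ → sSup s ∈ C

/-- `S` is stationary in `κ`: it meets every club in `κ`. -/
def IsStationaryIn (S : Set Ordinal.{0}) (κ : Ordinal.{0}) : Prop :=
  ∀ C, IsClubIn C κ → (S ∩ C).Nonempty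

/-- the cofinality of a cardinal -/
def cofC (lam : Cardinal.{0}) : Cardinal.{0} := lam.ord.cof

/-- `E^{λ⁺}_σ = {α < λ⁺ : cf(α) = σ}` -/
def Eeq (lam σ : Cardinal.{0}) : Set Ordinal.{0} :=
  {α | α < succOrd lam ∧ α.cof = σ}

/-- `E^{λ⁺}_{≠ cf(λ)} = {α < λ⁺ : α limit, cf(α) ≠ cf(λ)}` -/
def Ene (lam : Cardinal.{0}) : Set Ordinal.{0} :=
  {α | α < succOrd lam ∧ Order.IsSuccLimit α ∧ α.cof ≠ cofC lam}

/-- `E^{λ⁺}_{< λ} = {α < λ⁺ : α limit, cf(α) < λ}` -/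
def Elt (lam : Cardinal.{0}) : Set Ordinal.{0} :=
  {α | α < succOrd lam ∧ Order.IsSuccLimit α ∧ α.cof < lam}

/-- `tr(S) = {γ < κ : cf(γ) > ω and S ∩ γ is stationary in γ}` -/
def tr (κ : Ordinal.{0}) (S : Set Ordinal.{0}) : Set Ordinal.{0} :=
  {γ | γ < κ ∧ Cardinal.aleph0 < γ.cof ∧ IsStationaryIn (S ∩ Set.Iio γ) γ}

/-- Jensen's diamond principle `◊_S`. -/
def Diamond (lam : Cardinal.{0}) (S : Set Ordinal.{0}) : Prop :=
  ∃ A : Ordinal.{0} → Set Ordinal.{0},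
    (∀ α ∈ S, A α ⊆ Set.Iio α) ∧
    ∀ Z : Set Ordinal.{0}, Z ⊆ Set.Iio (succOrd lam) →
      IsStationaryIn {α | α ∈ S ∧ Z ∩ Set.Iio α = A α} (succOrd lam)

/-- `◊*_S` -/
def DiamondStar (lam : Cardinal.{0}) (S : Set Ordinal.{0}) : Prop :=
  ∃ A : Ordinal.{0} → Set (Set Ordinal.{0}),
    (∀ α ∈ S, (∀ X ∈ A α, X ⊆ Set.Iio α) ∧ #(A α) ≤ Cardinal.lift.{1} lam) ∧
    ∀ Z : Set Ordinal.{0}, Z ⊆ Set.Iio (succOrd lam) →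
      ∃ C, IsClubIn C (succOrd lam) ∧
        ∀ α ∈ C ∩ S, Z ∩ Set.Iio α ∈ A α

/-- `◊⁺_S` -/
def DiamondPlus (lam : Cardinal.{0}) (S : Set Ordinal.{0}) : Prop :=
  ∃ A : Ordinal.{0} → Set (Set Ordinal.{0}),
    (∀ α ∈ S, (∀ X ∈ A α, X ⊆ Set.Iio α) ∧ #(A α) ≤ Cardinal.lift.{1} lam) ∧
    ∀ Z : Set Ordinal.{0}, Z ⊆ Set.Iio (succOrd lam) →
      ∃ C, IsClubIn C (succOrd lam) ∧
        ∀ α ∈ C ∩ S, Z ∩ Set.Iio α ∈ A α ∧ C ∩ Set.Iio α ∈ A α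

/-- `◊^{λ⁺}_{λ⁺}` -/
def DiamondTr (lam : Cardinal.{0}) : Prop :=
  ∃ A : Ordinal.{0} → Set (Set Ordinal.{0}),
    (∀ α < succOrd lam, (∀ X ∈ A α, X ⊆ Set.Iio α) ∧ #(A α) ≤ Cardinal.lift.{1} lam) ∧
    ∀ Z : Set Ordinal.{0}, Z ⊆ Set.Iio (succOrd lam) →
      ¬ IsStationaryIn
        (tr (succOrd lam) {α | α < succOrd lam ∧ Z ∩ Set.Iio α ∉ A α}) (succOrd lam)

/-- `♣⁻_S` -/
def ClubMinus (lam : Cardinal.{0}) (S : Set Ordinal.{0}) : Prop :=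
  ∃ A : Ordinal.{0} → Set (Set Ordinal.{0}),
    (∀ α ∈ S, (∀ X ∈ A α, X ⊆ Set.Iio α ∧ #X < Cardinal.lift.{1} lam) ∧
      #(A α) ≤ Cardinal.lift.{1} lam) ∧
    ∀ Z : Set Ordinal.{0}, Z ⊆ Set.Iio (succOrd lam) →
      (∀ β < succOrd lam, ∃ γ ∈ Z, β ≤ γ) →
      IsStationaryIn {α | α ∈ S ∧ ∃ X ∈ A α, sSup (Z ∩ X) = α} (succOrd lam)

/-- the order type of a set of ordinals -/
def otp (s : Set Ordinal.{0}) : Ordinal.{1} :=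
  Ordinal.type (Subrel ((· < ·) : Ordinal.{0} → Ordinal.{0} → Prop) (· ∈ s))

/-- the weak square principle `□*_λ` -/
def SquareStar (lam : Cardinal.{0}) : Prop :=
  ∃ 𝒞 : Ordinal.{0} → Set (Set Ordinal.{0}),
    ∀ α, α < succOrd lam → Order.IsSuccLimit α →
      (𝒞 α).Nonempty ∧ #(𝒞 α) ≤ Cardinal.lift.{1} lam ∧
      (∀ C ∈ 𝒞 α, IsClubIn C α) ∧
      (α.cof < lam → ∀ C ∈ 𝒞 α, otp C < Ordinal.lift.{1} lam.ord) ∧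
      (∀ C ∈ 𝒞 α, ∀ β < α, sSup (C ∩ Set.Iio β) = β → C ∩ Set.Iio β ∈ 𝒞 β)

/-- `T ∈ I[S;λ]` -/
def InIdealISL (lam : Cardinal.{0}) (S T : Set Ordinal.{0}) : Prop :=
  T ⊆ tr (succOrd lam) S ∧
  ∃ d : Ordinal.{0} → Ordinal.{0} → Ordinal.{0},
    (∀ α β, α < β → β < succOrd lam → d α β < (cofC lam).ord) ∧
    (∀ α β γ, α < β → β < γ → γ < succOrd lam → d α γ ≤ max (d α β) (d β γ)) ∧
    (∀ i < (cofC lam).ord, ∀ β < succOrd lam,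
      #{α : Ordinal.{0} | α < β ∧ d α β ≤ i} < Cardinal.lift.{1} lam) ∧
    ∃ C, IsClubIn C (succOrd lam) ∧
      ∀ γ ∈ T ∩ C, cofC lam < γ.cof →
        ∃ Sg ⊆ S ∩ Set.Iio γ, IsStationaryIn Sg γ ∧
          sSup {x : Ordinal.{0} | ∃ α ∈ Sg, ∃ β ∈ Sg, α < β ∧ x = d α β} < (cofC lam).ord

/-- the stationary approachability property `SAP_λ` -/
def SAP (lam : Cardinal.{0}) : Prop :=
  ∀ S ⊆ Eeq lam (cofC lam), IsStationaryIn S (succOrd lam) →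
    IsStationaryIn (tr (succOrd lam) S) (succOrd lam) →
    ∃ T, InIdealISL lam S T ∧ IsStationaryIn T (succOrd lam)

/-- the reflection principle `R₁(θ,κ)` -/
def R1 (θ κ : Cardinal.{0}) : Prop :=
  ∀ f : Ordinal.{0} → Ordinal.{0},
    (∀ α, α < θ.ord → Order.IsSuccLimit α → α.cof < κ → f α < κ.ord) →
    ∃ j < κ.ord,
      IsStationaryIn
        {δ | δ < θ.ord ∧ δ.cof = κ ∧
          IsStationaryIn
            ({α | α < θ.ord ∧ Order.IsSuccLimit α ∧ α.cof < κ ∧ f α < j} ∩ Set.Iio δ) δ}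
        θ.ord

/-- the weak diamond principle `Φ_S` -/
def WeakDiamond (lam : Cardinal.{0}) (S : Set Ordinal.{0}) : Prop :=
  ∀ F : (α : Ordinal.{0}) → (Set.Iio α → Bool) → Bool,
    ∃ g : Ordinal.{0} → Bool,
      ∀ f : Ordinal.{0} → Bool,
        IsStationaryIn {α | α ∈ S ∧ F α (fun β => f β.1) = g α} (succOrd lam)

/-- `L` is a ladder system on `S` -/
def IsLadderSystem (S : Set Ordinal.{0}) (L : Ordinal.{0} → Set Ordinal.{0}) : Prop :=
  ∀ α ∈ S, L α ⊆ Set.Iio α ∧ sSup (L α) = α ∧ otp (L α) = Ordinal.lift.{1} α.cof.ord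

/-- the ladder system `L` on `S` has the uniformization property -/
def HasUniformization (S : Set Ordinal.{0}) (L : Ordinal.{0} → Set Ordinal.{0}) : Prop :=
  ∀ c : Ordinal.{0} → Ordinal.{0} → Bool,
    ∃ f : Ordinal.{0} → Bool,
      ∀ α ∈ S, Order.IsSuccLimit α → sSup {β | β ∈ L α ∧ c α β ≠ f β} < α

/-- `𝒳` is a stationary family of sets in `[λ⁺]^{<λ}` -/
def IsStationaryFamily (lam : Cardinal.{0}) (𝒳 : Set (Set Ordinal.{0})) : Prop :=
  (∀ X ∈ 𝒳, X ⊆ Set.Iio (succOrd lam) ∧ #X < Cardinal.lift.{1} lam) ∧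
  ∀ f : Finset Ordinal.{0} → Ordinal.{0},
    (∀ s : Finset Ordinal.{0}, ↑s ⊆ Set.Iio (succOrd lam) → f s < succOrd lam) →
    ∃ X ∈ 𝒳, ∀ s : Finset Ordinal.{0}, ↑s ⊆ X → f s ∈ X

/-- the principle `(1)_S` -/
def Princ1 (lam : Cardinal.{0}) (S : Set Ordinal.{0}) : Prop :=
  ∃ 𝒳 : Set (Set Ordinal.{0}), IsStationaryFamily lam 𝒳 ∧
    (∀ X ∈ 𝒳, ∀ Y ∈ 𝒳, sSup X = sSup Y → X = Y) ∧
    ∀ X ∈ 𝒳, sSup X ∈ S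

/-- the principle `(λ)_S` -/
def PrincLam (lam : Cardinal.{0}) (S : Set Ordinal.{0}) : Prop :=
  ∃ 𝒳 : Set (Set Ordinal.{0}), IsStationaryFamily lam 𝒳 ∧
    (∀ β : Ordinal.{0}, #{X | X ∈ 𝒳 ∧ sSup X = β} ≤ Cardinal.lift.{1} lam) ∧
    ∀ X ∈ 𝒳, sSup X ∈ S

/-- `NS_{λ⁺} ↾ S` is saturated -/
def Saturated (lam : Cardinal.{0}) (S : Set Ordinal.{0}) : Prop :=
  ∀ F : Ordinal.{0} → Set Ordinal.{0},
    (∀ i < succ2Ord lam, F i ⊆ S ∧ IsStationaryIn (F i) (succOrd lam)) →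
    (∀ i j, i < j → j < succ2Ord lam → F i ≠ F j) →
    ∃ i j, i < j ∧ j < succ2Ord lam ∧ IsStationaryIn (F i ∩ F j) (succOrd lam)

/-- `(T, lt)` is a `λ⁺`-Souslin tree, with height function `ht`. -/
def IsSouslinTree (lam : Cardinal.{0}) (T : Type) (lt : T → T → Prop)
    (ht : T → Ordinal.{0}) : Prop :=
  (∀ x, ¬ lt x x) ∧
  (∀ x y z, lt x y → lt y z → lt x z) ∧
  (∀ x y z, lt x z → lt y z → lt x y ∨ x = y ∨ lt y x) ∧
  (∀ x y, lt x y → ht x < ht y) ∧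
  (∀ x, ∀ β < ht x, ∃! y, lt y x ∧ ht y = β) ∧
  (∀ x, ht x < succOrd lam) ∧
  (∀ α < succOrd lam, ∃ x, ht x = α) ∧
  (∀ α : Ordinal.{0}, #{x : T | ht x = α} ≤ lam) ∧
  (∀ A : Set T, (∀ x ∈ A, ∀ y ∈ A, x = y ∨ lt x y ∨ lt y x) → #A < Order.succ lam) ∧
  (∀ A : Set T, (∀ x ∈ A, ∀ y ∈ A, x ≠ y → ¬ lt x y ∧ ¬ lt y x) → #A < Order.succ lam)

/-- the set of cardinalities of `⊇`-cofinal subfamilies of `[λ]^σ` -/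
def covFamilies (lam σ : Cardinal.{0}) : Set Cardinal.{1} :=
  {c | ∃ D : Set (Set Ordinal.{0}),
    (∀ X ∈ D, X ⊆ Set.Iio lam.ord ∧ #X = Cardinal.lift.{1} σ) ∧
    (∀ Y : Set Ordinal.{0}, Y ⊆ Set.Iio lam.ord → #Y = Cardinal.lift.{1} σ →
      ∃ X ∈ D, Y ⊆ X) ∧
    #D = c}

/-- `cf([λ]^σ, ⊇)`, the least cardinality of a `⊇`-cofinal subfamily of `[λ]^σ` -/
def covNum (lam σ : Cardinal.{0}) : Cardinal.{1} := sInf (covFamilies lam σ)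

section Aux

open Ordinal Set

/-- Enumeration of all bounded subsets of `λ⁺` by ordinals below `λ⁺`. -/
theorem exists_enum (lam : Cardinal.{0}) (hlam : Cardinal.aleph0 < lam)
    (h2 : 2 ^ lam = Order.succ lam) :
    ∃ Y : Ordinal.{0} → Set Ordinal.{0},
      ∀ X : Set Ordinal.{0}, ∀ β, β < succOrd lam → X ⊆ Set.Iio β →
        ∃ i, i < succOrd lam ∧ Y i = X := by
  have hlam0 : Cardinal.aleph0 ≤ lam := hlam.le
  set κ := succOrd lam with hκdef
  have hcardκ : κ.card = Order.succ lam := Cardinal.card_ord _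
  -- embeddings of initial segments into `Iio lam.ord`
  have hemb : ∀ β : Ordinal.{0}, β < κ →
      Nonempty ((Set.Iio β) ↪ (Set.Iio lam.ord)) := by
    intro β hβ
    rw [← Cardinal.le_def, Ordinal.mk_Iio_ordinal, Ordinal.mk_Iio_ordinal,
      Cardinal.lift_le, Cardinal.card_ord]
    have : β.card < Order.succ lam := by
      rwa [← Cardinal.lt_ord]
    exact Order.lt_succ_iff.mp this
  classical
  let e : ∀ β : Ordinal.{0}, β < κ → ((Set.Iio β) ↪ (Set.Iio lam.ord)) :=
    fun β h => (hemb β h).some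
  let j : Ordinal.{0} → Ordinal.{0} → Ordinal.{0} :=
    fun β => if h : β < κ then (fun x => if hx : x < β then (e β h ⟨x, hx⟩).1 else 0)
      else fun _ => 0
  have hj0 : ∀ β (h : β < κ) x (hx : x < β), j β x = (e β h ⟨x, hx⟩).1 := by
    intro β h x hx
    simp only [j, dif_pos h, dif_pos hx]
  have hj1 : ∀ β (h : β < κ) x (hx : x < β), j β x < lam.ord := by
    intro β h x hx
    rw [hj0 β h x hx]
    exact (e β h ⟨x, hx⟩).2
  have hj2 : ∀ β (h : β < κ) x (hx : x < β) y (hy : y < β), j β x = j β y → x = y := by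
    intro β h x hx y hy hxy
    rw [hj0 β h x hx, hj0 β h y hy] at hxy
    have := (e β h).injective (Subtype.ext hxy)
    exact congrArg Subtype.val this
  -- the family of bounded sets
  set B : Set (Set Ordinal.{0}) := {X | ∃ β, β < κ ∧ X ⊆ Set.Iio β} with hBdef
  let code : B → (Set.Iio κ) × Set (Set.Iio lam.ord) :=
    fun X => ⟨⟨X.2.choose, X.2.choose_spec.1⟩,
      {w | ∃ x, x ∈ X.1 ∧ j X.2.choose x = w.1}⟩
  have hcode : Function.Injective code := by
    rintro ⟨X, hX⟩ ⟨X', hX'⟩ h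
    obtain ⟨h1, h2⟩ := Prod.mk.injEq .. ▸ h
    have h1 : hX.choose = hX'.choose := congrArg Subtype.val h1
    apply Subtype.ext
    have key : ∀ (W W' : Set Ordinal.{0}) (hW : W ∈ B) (hW' : W' ∈ B),
        hW.choose = hW'.choose →
        {w : (Set.Iio lam.ord) | ∃ x, x ∈ W ∧ j hW.choose x = w.1} =
          {w : (Set.Iio lam.ord) | ∃ x, x ∈ W' ∧ j hW'.choose x = w.1} →
        W ⊆ W' := by
      intro W W' hW hW' hch hset z hz
      have hzβ : z < hW.choose := hW.choose_spec.2 hz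
      have hwlt : j hW.choose z < lam.ord := hj1 _ hW.choose_spec.1 _ hzβ
      have hmem : (⟨j hW.choose z, hwlt⟩ : (Set.Iio lam.ord)) ∈
          {w : (Set.Iio lam.ord) | ∃ x, x ∈ W ∧ j hW.choose x = w.1} := ⟨z, hz, rfl⟩
      rw [hset] at hmem
      obtain ⟨x, hxW', hxj⟩ := hmem
      have hxβ : x < hW'.choose := hW'.choose_spec.2 hxW'
      rw [← hch] at hxβ hxj
      have : x = z := hj2 _ hW.choose_spec.1 x hxβ z hzβ hxj
      rwa [← this]
    exact Set.Subset.antisymm (key X X' hX hX' h1 h2) (key X' X hX' hX h1.symm h2.symm)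
  -- cardinality computation
  have hBle : #B ≤ #(Set.Iio κ) := by
    calc #B ≤ #((Set.Iio κ) × Set (Set.Iio lam.ord)) := Cardinal.mk_le_of_injective hcode
    _ = Cardinal.lift.{1,0} (Order.succ lam) * Cardinal.lift.{1,0} (Order.succ lam) := by
        rw [Cardinal.mk_prod, Cardinal.mk_set, Ordinal.mk_Iio_ordinal,
          Ordinal.mk_Iio_ordinal, hcardκ, Cardinal.card_ord, Cardinal.lift_id,
          Cardinal.lift_id]
        congr 1
        rw [← Cardinal.lift_two.{1,0}, ← Cardinal.lift_power, h2]
    _ = Cardinal.lift.{1,0} (Order.succ lam) := by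
        apply Cardinal.mul_eq_self
        rw [Cardinal.aleph0_le_lift]
        exact hlam0.trans (Order.le_succ _)
    _ = #(Set.Iio κ) := by rw [Ordinal.mk_Iio_ordinal, hcardκ]
  obtain ⟨F⟩ := (Cardinal.le_def _ _).mp hBle
  refine ⟨fun i => if h : ∃ X : B, (F X).1 = i then h.choose.1 else ∅, ?_⟩
  intro X β hβ hsub
  have hXB : X ∈ B := ⟨β, hβ, hsub⟩
  refine ⟨(F ⟨X, hXB⟩).1, (F ⟨X, hXB⟩).2, ?_⟩
  have hex : ∃ X' : B, (F X').1 = (F ⟨X, hXB⟩).1 := ⟨⟨X, hXB⟩, rfl⟩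
  show (if h : ∃ X' : B, (F X').1 = (F ⟨X, hXB⟩).1 then h.choose.1 else ∅) = X
  rw [dif_pos hex]
  have : hex.choose = ⟨X, hXB⟩ := F.injective (Subtype.ext hex.choose_spec)
  rw [this]

end Aux

theorem stmt1 (lam σ : Cardinal.{0}) (hlam : Cardinal.aleph0 < lam)
    (h2 : 2 ^ lam = Order.succ lam)
    (hσ : σ.IsRegular) (hsiglt : σ < lam) (hpow : lam ^ σ = lam) :
    DiamondStar lam (Eeq lam σ) := by
  classical
  have hlam0 : Cardinal.aleph0 ≤ lam := hlam.le
  set κ := succOrd lam with hκdef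
  have hreg : (Order.succ lam).IsRegular := Cardinal.isRegular_succ hlam0
  have hκlim : Order.IsSuccLimit κ := Cardinal.isSuccLimit_ord (hlam0.trans (Order.le_succ _))
  have hcardle : ∀ α, α < κ → α.card ≤ lam := by
    intro α hα
    exact Order.lt_succ_iff.mp (Cardinal.lt_ord.mp hα)
  obtain ⟨Y, hY⟩ := exists_enum lam hlam h2
  -- the guessing family
  set A : Ordinal.{0} → Set (Set Ordinal.{0}) :=
    fun α => {X | X ⊆ Set.Iio α ∧
      ∃ e : (Set.Iio σ.ord) → (Set.Iio α), X = ⋃ i, Y (e i).1} with hAdef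
  refine ⟨A, ?_, ?_⟩
  · -- smallness of the family
    intro α hα
    refine ⟨fun X hX => hX.1, ?_⟩
    have hsub : A α ⊆ Set.range
        (fun e : (Set.Iio σ.ord) → (Set.Iio α) => ⋃ i, Y (e i).1) := by
      rintro X ⟨-, e, he⟩
      exact ⟨e, he.symm⟩
    calc #(A α) ≤ #(Set.range (fun e : (Set.Iio σ.ord) → (Set.Iio α) =>
          ⋃ i, Y (e i).1)) := Cardinal.mk_le_mk_of_subset hsub
      _ ≤ #((Set.Iio σ.ord) → (Set.Iio α)) := Cardinal.mk_range_le
      _ = #(Set.Iio α) ^ #(Set.Iio σ.ord) := (Cardinal.power_def _ _).symm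
      _ = Cardinal.lift.{1} (α.card ^ σ) := by
          rw [Ordinal.mk_Iio_ordinal, Ordinal.mk_Iio_ordinal, Cardinal.card_ord,
            Cardinal.lift_power]
      _ ≤ Cardinal.lift.{1} (lam ^ σ) := by
          rw [Cardinal.lift_le]
          exact Cardinal.power_le_power_right (hcardle α hα.1)
      _ = Cardinal.lift.{1} lam := by rw [hpow]
  · -- the guessing property
    intro Z hZ
    -- index function
    set g : Ordinal.{0} → Ordinal.{0} := fun β =>
      if h : β < κ then (hY (Z ∩ Set.Iio β) β h Set.inter_subset_right).choose
      else 0 with hgdef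
    have hg : ∀ β, β < κ → g β < κ ∧ Y (g β) = Z ∩ Set.Iio β := by
      intro β h
      simp only [g, dif_pos h]
      exact (hY (Z ∩ Set.Iio β) β h Set.inter_subset_right).choose_spec
    -- the club of closure points of `g`
    set C : Set Ordinal.{0} := {α | α < κ ∧ 0 < α ∧ ∀ β < α, g β < α} with hCdef
    have hCclub : IsClubIn C κ := by
      refine ⟨fun α hα => hα.1, ?_, ?_⟩
      · -- unboundedness
        intro δ hδ
        let F : ℕ → Ordinal.{0} := fun n => Nat.rec (δ + 1)
          (fun _ ih => max (ih + 1) (Ordinal.blsub ih (fun β _ => g β))) n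
        have hF0 : F 0 = δ + 1 := rfl
        have hFs : ∀ n, F (n + 1) =
            max (F n + 1) (Ordinal.blsub (F n) (fun β _ => g β)) := fun n => rfl
        have hFκ : ∀ n, F n < κ := by
          intro n
          induction n with
          | zero =>
              rw [hF0, Ordinal.add_one_eq_succ]
              exact hκlim.succ_lt hδ
          | succ n ih =>
              rw [hFs n]
              apply max_lt
              · rw [Ordinal.add_one_eq_succ]; exact hκlim.succ_lt ih
              · refine Cardinal.blsub_lt_ord_of_isRegular hreg ?_ ?_
                · exact Cardinal.lt_ord.mp ih
                · intro i hi
                  exact (hg i (hi.trans ih)).1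
        have hβsup : (⨆ n, F n) < κ := by
          refine Cardinal.iSup_lt_ord_of_isRegular hreg ?_ hFκ
          rw [Cardinal.mk_nat]
          exact hlam.trans (Order.lt_succ _)
        have hF0le : δ + 1 ≤ ⨆ n, F n := hF0 ▸ Ordinal.le_iSup F 0
        refine ⟨⨆ n, F n, ⟨hβsup, ?_, ?_⟩, ?_⟩
        · have : (0 : Ordinal) < δ + 1 := by
            rw [Ordinal.add_one_eq_succ]
            exact (zero_le (a := δ)).trans_lt (Order.lt_succ δ)
          exact this.trans_le hF0le
        · intro β hβ
          obtain ⟨n, hn⟩ := Ordinal.lt_iSup_iff.mp hβ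
          have h1 : g β < Ordinal.blsub (F n) (fun β _ => g β) :=
            Ordinal.lt_blsub (fun β _ => g β) β hn
          have h2 : Ordinal.blsub (F n) (fun β _ => g β) ≤ F (n + 1) := by
            rw [hFs n]; exact le_max_right _ _
          exact (h1.trans_le h2).trans_le (Ordinal.le_iSup F (n + 1))
        · exact (Order.le_succ δ).trans (Ordinal.add_one_eq_succ δ ▸ hF0le)
      · -- closedness
        intro s hs hne hsup
        have hbdd : BddAbove s := ⟨κ, fun x hx => ((hs hx).1).le⟩
        obtain ⟨x, hx⟩ := hne
        have hxle : x ≤ sSup s := le_csSup hbdd hx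
        refine ⟨hsup, (hs hx).2.1.trans_le hxle, ?_⟩
        intro β hβ
        obtain ⟨y, hy, hβy⟩ := (lt_csSup_iff hbdd ⟨x, hx⟩).mp hβ
        exact ((hs hy).2.2 β hβy).trans_le (le_csSup hbdd hy)
    refine ⟨C, hCclub, ?_⟩
    rintro α ⟨hαC, hακ, hαcof⟩
    -- α is a limit ordinal of cofinality σ
    have hαlim : Order.IsSuccLimit α := Ordinal.aleph0_le_cof.mp (hαcof ▸ hσ.1)
    obtain ⟨f, hf⟩ := Ordinal.exists_fundamental_sequence α
    have hord : σ.ord = α.cof.ord := by rw [hαcof]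
    have hflt : ∀ b (hb : b < α.cof.ord), f b hb < α := by
      intro b hb
      conv_rhs => rw [← hf.blsub_eq]
      exact Ordinal.lt_blsub _ b hb
    have hfsα : ∀ b (hb : b < α.cof.ord), f b hb + 1 < α := by
      intro b hb
      rw [Ordinal.add_one_eq_succ]
      exact hαlim.succ_lt (hflt b hb)
    have hαC' : ∀ β < α, g β < α := hαC.2.2
    refine ⟨Set.inter_subset_right, ?_⟩
    refine ⟨fun i => ⟨g (f i.1 (hord ▸ i.2) + 1), hαC' _ (hfsα i.1 (hord ▸ i.2))⟩, ?_⟩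
    ext x
    simp only [Set.mem_inter_iff, Set.mem_Iio, Set.mem_iUnion]
    constructor
    · rintro ⟨hxZ, hxα⟩
      have : x < Ordinal.blsub α.cof.ord f := hf.blsub_eq.symm ▸ hxα
      obtain ⟨b, hb, hxb⟩ := Ordinal.lt_blsub_iff.mp this
      refine ⟨⟨b, hord ▸ hb⟩, ?_⟩
      have hYe : Y (g (f b hb + 1)) = Z ∩ Set.Iio (f b hb + 1) :=
        (hg _ ((hfsα b hb).trans hακ)).2
      show x ∈ Y (g (f b _ + 1))
      rw [hYe]
      refine ⟨hxZ, ?_⟩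
      rw [Ordinal.add_one_eq_succ]
      exact Order.lt_succ_iff.mpr hxb
    · rintro ⟨i, hxi⟩
      have hb : i.1 < α.cof.ord := hord ▸ i.2
      have hYe : Y (g (f i.1 hb + 1)) = Z ∩ Set.Iio (f i.1 hb + 1) :=
        (hg _ ((hfsα i.1 hb).trans hακ)).2
      rw [hYe] at hxi
      exact ⟨hxi.1, hxi.2.trans (hfsα i.1 hb)⟩

end DiamondSurvey
end
end

section
/- Let λ be a singular cardinal with 2^λ = λ⁺, and let σ < λ be an infinite regular cardinal with σ ≠ cf(λ) such that sup{μ^σ : μ a cardinal, μ < λ} = λ. Then ◊*_{E^{λ⁺}_σ} holds. -/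
noncomputable section

namespace DiamondSurvey

open Cardinal

private lemma small_of_mk_le_lift {α : Type 1} {c : Cardinal.{0}}
    (h : #α ≤ Cardinal.lift.{1} c) : Small.{0} α := by
  obtain ⟨c', -, hc'⟩ := Cardinal.le_lift_iff.1 h
  have : #α = #(ULift.{1} c'.out) := by
    rw [Cardinal.mk_uLift, Cardinal.mk_out, hc']
  obtain ⟨e⟩ := Cardinal.eq.1 this
  exact ⟨⟨c'.out, ⟨e.trans Equiv.ulift⟩⟩⟩

private lemma sSup_lt_of_card {o : Ordinal.{0}} {s : Set Ordinal.{0}}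
    (h1 : #s < Cardinal.lift.{1} o.cof) (h2 : ∀ a ∈ s, a < o) (h0 : 0 < o) :
    sSup s < o := by
  rcases Set.eq_empty_or_nonempty s with rfl | hne
  · simpa [csSup_empty] using h0
  have hsm : Small.{0} ↥s := small_of_mk_le_lift h1.le
  have hrange : Set.range (fun i : Shrink ↥s => ((equivShrink ↥s).symm i).1) = s := by
    ext x
    constructor
    · rintro ⟨i, rfl⟩; exact Subtype.mem _
    · intro hx; exact ⟨equivShrink ↥s ⟨x, hx⟩, by simp⟩
  have heq : sSup s = ⨆ i : Shrink ↥s, ((equivShrink ↥s).symm i).1 := by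
    rw [iSup, hrange]
  rw [heq]
  refine Ordinal.iSup_lt_ord ?_ fun i => h2 _ (Subtype.mem _)
  have hl : Cardinal.lift.{1} #(Shrink ↥s) = #↥s := by
    simpa using (Cardinal.lift_mk_shrink'.{1,0} ↥s)
  have h1' := h1
  rw [← hl] at h1'
  exact Cardinal.lift_lt.mp h1'

private lemma exists_unbounded_subset (α : Ordinal.{0}) (h : Order.IsSuccLimit α) :
    ∃ b : Set Ordinal.{0}, b ⊆ Set.Iio α ∧ (∀ x < α, ∃ β ∈ b, x < β) ∧
      #b ≤ Cardinal.lift.{1} α.cof := by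
  obtain ⟨ι, f, hf, hι⟩ := Ordinal.exists_lsub_cof α
  refine ⟨Set.range f, ?_, ?_, ?_⟩
  · rintro x ⟨i, rfl⟩; exact hf ▸ Ordinal.lt_lsub f i
  · intro x hx
    have hx1 : Order.succ x < Ordinal.lsub f := hf ▸ h.succ_lt hx
    obtain ⟨i, hi⟩ := Ordinal.lt_lsub_iff.1 hx1
    exact ⟨f i, ⟨i, rfl⟩, (Order.succ_le_iff.1 hi)⟩
  · have := Cardinal.mk_range_le_lift (f := f)
    rw [Cardinal.lift_id'] at this
    rwa [hι] at this

private lemma pow_eq_self_of_lt_cof {lam σ : Cardinal.{0}}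
    (hinf : Cardinal.aleph0 ≤ lam) (hσ1 : 1 ≤ σ)
    (hlt : σ < lam.ord.cof)
    (hsup : (⨆ μ : Set.Iio lam, (μ : Cardinal.{0}) ^ σ) = lam) :
    lam ^ σ = lam := by
  have hbdd : BddAbove (Set.range fun μ : Set.Iio lam => (μ : Cardinal.{0}) ^ σ) :=
    Cardinal.bddAbove_range _
  have hterm : ∀ μ : Cardinal.{0}, μ < lam → μ ^ σ ≤ lam := by
    intro μ hμ
    have := le_ciSup hbdd (⟨μ, hμ⟩ : Set.Iio lam)
    rwa [hsup] at this
  refine le_antisymm ?_ (Cardinal.self_le_power lam hσ1)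
  have key : Cardinal.lift.{1} (lam ^ σ) ≤ Cardinal.lift.{1} lam := by
    have h1 : Cardinal.lift.{1} (lam ^ σ) = #(Set.Iio σ.ord → Set.Iio lam.ord) := by
      rw [Cardinal.lift_power, ← Cardinal.power_def, Ordinal.mk_Iio_ordinal,
        Ordinal.mk_Iio_ordinal, Cardinal.card_ord, Cardinal.card_ord]
    rw [h1]
    have hLlim : Order.IsSuccLimit lam.ord := Cardinal.isSuccLimit_ord hinf
    have hbound : ∀ f : Set.Iio σ.ord → Set.Iio lam.ord,
        ∃ b : Set.Iio lam.ord, ∀ j, (f j).1 < b.1 := by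
      intro f
      have hsS : sSup (Set.range fun j => (f j).1) < lam.ord := by
        refine sSup_lt_of_card ?_ ?_ (hLlim.pos)
        · refine lt_of_le_of_lt Cardinal.mk_range_le ?_
          rw [Ordinal.mk_Iio_ordinal, Cardinal.card_ord]
          exact Cardinal.lift_lt.mpr hlt
        · rintro a ⟨j, rfl⟩; exact (f j).2
      refine ⟨⟨Order.succ (sSup (Set.range fun j => (f j).1)), hLlim.succ_lt hsS⟩, ?_⟩
      intro j
      refine lt_of_le_of_lt ?_ (Order.lt_succ _)
      exact le_csSup ⟨lam.ord, by rintro a ⟨j', rfl⟩; exact (f j').2.le⟩ ⟨j, rfl⟩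
    have hcover : (Set.univ : Set (Set.Iio σ.ord → Set.Iio lam.ord)) ⊆
        ⋃ b : Set.Iio lam.ord, {f | ∀ j, (f j).1 < b.1} := by
      intro f _
      obtain ⟨b, hb⟩ := hbound f
      exact Set.mem_iUnion.2 ⟨b, hb⟩
    calc #(Set.Iio σ.ord → Set.Iio lam.ord)
        = #(Set.univ : Set (Set.Iio σ.ord → Set.Iio lam.ord)) := Cardinal.mk_univ.symm
      _ ≤ #(⋃ b : Set.Iio lam.ord, {f : Set.Iio σ.ord → Set.Iio lam.ord | ∀ j, (f j).1 < b.1}) :=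
          Cardinal.mk_le_mk_of_subset hcover
      _ ≤ #(Set.Iio lam.ord) * ⨆ b : Set.Iio lam.ord,
            #{f : Set.Iio σ.ord → Set.Iio lam.ord | ∀ j, (f j).1 < b.1} :=
          Cardinal.mk_iUnion_le _
      _ ≤ Cardinal.lift.{1} lam * Cardinal.lift.{1} lam := by
          refine mul_le_mul' ?_ ?_
          · rw [Ordinal.mk_Iio_ordinal, Cardinal.card_ord]
          · refine ciSup_le' fun b => ?_
            have hemb : #{f : Set.Iio σ.ord → Set.Iio lam.ord | ∀ j, (f j).1 < b.1}
                ≤ #(Set.Iio σ.ord → Set.Iio b.1) := by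
              refine ⟨⟨fun f j => ⟨(f.1 j).1, f.2 j⟩, ?_⟩⟩
              intro f g hfg
              apply Subtype.ext
              funext j
              apply Subtype.ext
              have := congrFun hfg j
              simpa using congrArg Subtype.val this
            refine hemb.trans ?_
            rw [← Cardinal.power_def, Ordinal.mk_Iio_ordinal, Ordinal.mk_Iio_ordinal,
              Cardinal.card_ord, ← Cardinal.lift_power]
            have hblt : (b.1).card < lam := Cardinal.lt_ord.1 b.2
            exact Cardinal.lift_le.mpr (hterm _ hblt)
      _ = Cardinal.lift.{1} lam := by
          rw [← Cardinal.lift_mul, Cardinal.mul_eq_self hinf]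
  exact_mod_cast Cardinal.lift_le.mp key

private lemma club_of_closure (lam : Cardinal.{0}) (hinf : Cardinal.aleph0 ≤ lam)
    (h : Ordinal.{0} → Ordinal.{0}) (hh : ∀ β, h β < succOrd lam) :
    IsClubIn {α | lam.ord < α ∧ α < succOrd lam ∧
      ∀ β, lam.ord < β → β < α → h β < α} (succOrd lam) := by
  have hsuccinf : Cardinal.aleph0 ≤ Order.succ lam := hinf.trans (Order.le_succ _)
  have hκlim : Order.IsSuccLimit (succOrd lam) := Cardinal.isSuccLimit_ord hsuccinf
  have hcof : (succOrd lam).cof = Order.succ lam := (Cardinal.isRegular_succ hinf).cof_eq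
  have hLκ : lam.ord < succOrd lam := Cardinal.ord_lt_ord.2 (Order.lt_succ _)
  refine ⟨fun α hα => hα.2.1, ?_, ?_⟩
  · -- unbounded
    intro α hα
    set g : Ordinal.{0} → Ordinal.{0} := fun δ =>
      max (max (Order.succ δ) (Order.succ lam.ord))
        (sSup ((fun β => Order.succ (h β)) '' Set.Iio δ)) with hgdef
    have hg1 : ∀ δ, δ < g δ := fun δ =>
      lt_of_lt_of_le (Order.lt_succ δ) (le_max_of_le_left (le_max_left _ _))
    have hgL : ∀ δ, lam.ord < g δ := fun δ =>
      lt_of_lt_of_le (Order.lt_succ _) (le_max_of_le_left (le_max_right _ _))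
    have hg2 : ∀ δ, δ < succOrd lam → g δ < succOrd lam := by
      intro δ hδ
      refine max_lt (max_lt (hκlim.succ_lt hδ) (hκlim.succ_lt hLκ)) ?_
      refine sSup_lt_of_card ?_ ?_ hκlim.pos
      · refine lt_of_le_of_lt Cardinal.mk_image_le ?_
        rw [Ordinal.mk_Iio_ordinal, hcof]
        refine lt_of_le_of_lt (Cardinal.lift_le.mpr ?_)
          (Cardinal.lift_lt.mpr (Order.lt_succ lam))
        exact Order.lt_succ_iff.1 (Cardinal.lt_ord.1 hδ)
      · rintro x ⟨β, -, rfl⟩; exact hκlim.succ_lt (hh β)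
    have hg3 : ∀ δ β, β < δ → h β < g δ := by
      intro δ β hβ
      have hle : Order.succ (h β) ≤ sSup ((fun β => Order.succ (h β)) '' Set.Iio δ) :=
        le_csSup ⟨succOrd lam, by rintro x ⟨β', -, rfl⟩; exact (hκlim.succ_lt (hh β')).le⟩
          ⟨β, hβ, rfl⟩
      exact lt_of_lt_of_le (Order.lt_succ _) (le_trans hle (le_max_right _ _))
    set F : ℕ → Ordinal.{0} := fun n => g^[n] α with hFdef
    have hFκ : ∀ n, F n < succOrd lam := by
      intro n; induction n with
      | zero => simpa [hFdef] using hα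
      | succ n ih =>
        have : F (n+1) = g (F n) := Function.iterate_succ_apply' g n α
        rw [this]; exact hg2 _ ih
    have hFmono : ∀ n, F n < F (n+1) := by
      intro n
      have : F (n+1) = g (F n) := Function.iterate_succ_apply' g n α
      rw [this]; exact hg1 _
    have hbddF : BddAbove (Set.range F) :=
      ⟨succOrd lam, by rintro x ⟨n, rfl⟩; exact (hFκ n).le⟩
    have hβ'κ : sSup (Set.range F) < succOrd lam := by
      refine sSup_lt_of_card ?_ (by rintro x ⟨n, rfl⟩; exact hFκ n) hκlim.pos
      have h1 := Cardinal.mk_range_le_lift (f := F)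
      rw [Cardinal.lift_id', Cardinal.mk_nat, Cardinal.lift_aleph0] at h1
      refine lt_of_le_of_lt h1 ?_
      rw [hcof]
      exact Cardinal.aleph0_lt_lift.mpr (lt_of_le_of_lt hinf (Order.lt_succ lam))
    have hFle : ∀ n, F n ≤ sSup (Set.range F) := fun n => le_csSup hbddF ⟨n, rfl⟩
    have hltF : ∀ x, x < sSup (Set.range F) → ∃ n, x < F n := by
      intro x hx
      obtain ⟨y, ⟨n, rfl⟩, hy⟩ := (lt_csSup_iff hbddF ⟨F 0, ⟨0, rfl⟩⟩).1 hx
      exact ⟨n, hy⟩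
    refine ⟨sSup (Set.range F), ⟨?_, hβ'κ, ?_⟩, ?_⟩
    · have : lam.ord < F 1 := by
        have h1 : F 1 = g α := by simp [hFdef]
        rw [h1]; exact hgL α
      exact lt_of_lt_of_le this (hFle 1)
    · intro β hLβ hβ
      obtain ⟨n, hn⟩ := hltF β hβ
      have : h β < F (n+1) := by
        have he : F (n+1) = g (F n) := Function.iterate_succ_apply' g n α
        rw [he]; exact hg3 _ _ hn
      exact lt_of_lt_of_le this (hFle (n+1))
    · have : F 0 = α := rfl
      exact this ▸ hFle 0
  · -- closed
    intro s hs hne hsupκ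
    have hbdd : BddAbove s := ⟨succOrd lam, fun x hx => ((hs hx).2.1).le⟩
    obtain ⟨c0, hc0⟩ := hne
    refine ⟨?_, hsupκ, ?_⟩
    · exact lt_of_lt_of_le (hs hc0).1 (le_csSup hbdd hc0)
    · intro β hLβ hβ
      obtain ⟨c, hc, hβc⟩ := (lt_csSup_iff hbdd ⟨c0, hc0⟩).1 hβ
      exact lt_of_lt_of_le ((hs hc).2.2 β hLβ hβc) (le_csSup hbdd hc)


theorem stmt2 (lam σ : Cardinal.{0})
    (hinf : Cardinal.aleph0 ≤ lam) (hsing : cofC lam < lam)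
    (h2 : 2 ^ lam = Order.succ lam)
    (hσ : σ.IsRegular) (hsiglt : σ < lam) (hne : σ ≠ cofC lam)
    (hsup : (⨆ μ : Set.Iio lam, (μ : Cardinal.{0}) ^ σ) = lam) :
    DiamondStar lam (Eeq lam σ) := by
  classical
  have hsuccinf : Cardinal.aleph0 ≤ Order.succ lam := hinf.trans (Order.le_succ _)
  have hκlim : Order.IsSuccLimit (succOrd lam) := Cardinal.isSuccLimit_ord hsuccinf
  have hcofκ : (succOrd lam).cof = Order.succ lam := (Cardinal.isRegular_succ hinf).cof_eq
  have hLκ : lam.ord < succOrd lam := Cardinal.ord_lt_ord.2 (Order.lt_succ _)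
  have hLlim : Order.IsSuccLimit lam.ord := Cardinal.isSuccLimit_ord hinf
  have hcard_le : ∀ α : Ordinal.{0}, α < succOrd lam → α.card ≤ lam := fun α hα =>
    Order.lt_succ_iff.1 (Cardinal.lt_ord.1 hα)
  have hIiole : ∀ α : Ordinal.{0}, α < succOrd lam →
      #(Set.Iio α) ≤ Cardinal.lift.{1} lam := by
    intro α hα
    rw [Ordinal.mk_Iio_ordinal]
    exact Cardinal.lift_le.mpr (hcard_le α hα)
  have haleflift : Cardinal.aleph0 ≤ Cardinal.lift.{1} lam := Cardinal.aleph0_le_lift.mpr hinf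
  -- the coding surjections E β : Iio lam.ord ↠ Iio β
  have hEex : ∀ β : Ordinal.{0}, ∃ g : Ordinal.{0} → Ordinal.{0},
      lam.ord ≤ β → β < succOrd lam →
        (∀ x < lam.ord, g x < β) ∧ (∀ y < β, ∃ x < lam.ord, g x = y) := by
    intro β
    by_cases hβ : lam.ord ≤ β ∧ β < succOrd lam
    · have hc : #(Set.Iio lam.ord) = #(Set.Iio β) := by
        rw [Ordinal.mk_Iio_ordinal, Ordinal.mk_Iio_ordinal, Cardinal.card_ord]
        have hb1 : β.card ≤ lam := hcard_le β hβ.2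
        have hb2 : lam ≤ β.card := by
          have := Ordinal.card_le_card hβ.1
          rwa [Cardinal.card_ord] at this
        rw [le_antisymm hb1 hb2]
      obtain ⟨e⟩ := Cardinal.eq.1 hc
      refine ⟨fun x => if hx : x < lam.ord then (e ⟨x, hx⟩).1 else 0, fun _ _ => ⟨?_, ?_⟩⟩
      · intro x hx
        simp only [dif_pos hx]
        exact (e ⟨x, hx⟩).2
      · intro y hy
        refine ⟨(e.symm ⟨y, hy⟩).1, (e.symm ⟨y, hy⟩).2, ?_⟩
        simp only [Subtype.coe_eta, Equiv.apply_symm_apply]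
        rw [dif_pos (show ((e.symm ⟨y, hy⟩).1 : Ordinal.{0}) < lam.ord from (e.symm ⟨y, hy⟩).2)]
        simp
    · exact ⟨fun _ => 0, fun h1 h2 => absurd ⟨h1, h2⟩ hβ⟩
  choose E hE using hEex
  -- the enumeration X of subsets of Iio lam.ord
  have hXex : ∃ X : Ordinal.{0} → Set Ordinal.{0},
      ∀ V : Set Ordinal.{0}, V ⊆ Set.Iio lam.ord → ∃ γ, γ < succOrd lam ∧ X γ = V := by
    have hc : #(Set.Iio (succOrd lam)) = #(Set (Set.Iio lam.ord)) := by
      unfold succOrd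
      rw [Ordinal.mk_Iio_ordinal, Cardinal.card_ord, Cardinal.mk_set,
        Ordinal.mk_Iio_ordinal, Cardinal.card_ord, ← h2, Cardinal.lift_power,
        Cardinal.lift_two]
    obtain ⟨e⟩ := Cardinal.eq.1 hc
    refine ⟨fun γ => if hγ : γ < succOrd lam then Subtype.val '' (e ⟨γ, hγ⟩) else ∅, ?_⟩
    intro V hV
    refine ⟨(e.symm {x | x.1 ∈ V}).1, (e.symm {x | x.1 ∈ V}).2, ?_⟩
    dsimp only
    rw [dif_pos (show ((e.symm {x | x.1 ∈ V}).1 : Ordinal.{0}) < succOrd lam from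
      (e.symm {x | x.1 ∈ V}).2), Subtype.coe_eta, Equiv.apply_symm_apply]
    ext x
    constructor
    · rintro ⟨y, hy, rfl⟩; exact hy
    · intro hx; exact ⟨⟨x, hV hx⟩, hx, rfl⟩
  obtain ⟨X, hX⟩ := hXex
  -- the guessing families Q
  have halef_lt : Cardinal.aleph0 < lam := by
    rcases hinf.lt_or_eq with hl | hl
    · exact hl
    · exfalso
      subst hl
      have hreg : cofC Cardinal.aleph0 = Cardinal.aleph0 :=
        Cardinal.isRegular_aleph0.cof_eq
      rw [hreg] at hsing
      exact lt_irrefl _ hsing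
  have hQ : ∃ Q : Ordinal.{0} → Set (Set (Ordinal.{0} × Ordinal.{0})),
      (∀ α, α < succOrd lam → #(Q α) ≤ Cardinal.lift.{1} lam) ∧
      (∀ h : Ordinal.{0} → Ordinal.{0}, ∀ α, α.cof = σ → lam.ord < α → α < succOrd lam →
        (∀ β, lam.ord < β → β < α → h β < α) →
        ∃ p ∈ Q α, ∃ b ⊆ Set.Ioo lam.ord α, (∀ x < α, ∃ ξ ∈ b, x < ξ) ∧
          p = (fun ξ => (ξ, h ξ)) '' b) := by
    have hcaseA : lam ^ σ = lam → ∃ Q : Ordinal.{0} → Set (Set (Ordinal.{0} × Ordinal.{0})),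
        (∀ α, α < succOrd lam → #(Q α) ≤ Cardinal.lift.{1} lam) ∧
        (∀ h : Ordinal.{0} → Ordinal.{0}, ∀ α, α.cof = σ → lam.ord < α → α < succOrd lam →
          (∀ β, lam.ord < β → β < α → h β < α) →
          ∃ p ∈ Q α, ∃ b ⊆ Set.Ioo lam.ord α, (∀ x < α, ∃ ξ ∈ b, x < ξ) ∧
            p = (fun ξ => (ξ, h ξ)) '' b) := by
      intro hpow
      refine ⟨fun α => {p : Set (Ordinal.{0} × Ordinal.{0}) |
        p ⊆ Set.Iio α ×ˢ Set.Iio α ∧ #p ≤ Cardinal.lift.{1} σ}, ?_, ?_⟩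
      · intro α hα
        have hb := Cardinal.mk_bounded_subset_le (Set.Iio α ×ˢ Set.Iio α)
          (Cardinal.lift.{1} σ)
        have hprod : #↥(Set.Iio α ×ˢ Set.Iio α) ≤ Cardinal.lift.{1} lam := by
          calc #↥(Set.Iio α ×ˢ Set.Iio α)
              = #(↥(Set.Iio α) × ↥(Set.Iio α)) := Cardinal.mk_congr (Equiv.Set.prod _ _)
            _ = #↥(Set.Iio α) * #↥(Set.Iio α) := by
                rw [Cardinal.mk_prod]; simp
            _ ≤ Cardinal.lift.{1} lam * Cardinal.lift.{1} lam :=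
                mul_le_mul' (hIiole α hα) (hIiole α hα)
            _ = Cardinal.lift.{1} lam := by
                rw [← Cardinal.lift_mul, Cardinal.mul_eq_self hinf]
        calc #{p : Set (Ordinal.{0} × Ordinal.{0}) |
              p ⊆ Set.Iio α ×ˢ Set.Iio α ∧ #p ≤ Cardinal.lift.{1} σ}
            ≤ max #↥(Set.Iio α ×ˢ Set.Iio α) Cardinal.aleph0 ^ Cardinal.lift.{1} σ := hb
          _ ≤ Cardinal.lift.{1} lam ^ Cardinal.lift.{1} σ :=
              Cardinal.power_le_power_right (max_le hprod haleflift)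
          _ = Cardinal.lift.{1} lam := by rw [← Cardinal.lift_power, hpow]
      · intro h α hcof hLα hκα hcl
        have hlim : Order.IsSuccLimit α := Ordinal.aleph0_le_cof.1 (by rw [hcof]; exact hσ.aleph0_le)
        obtain ⟨b0, hb0sub, hb0unb, hb0card⟩ := exists_unbounded_subset α hlim
        refine ⟨(fun ξ => (ξ, h ξ)) '' (b0 ∩ Set.Ioi lam.ord), ⟨?_, ?_⟩,
          b0 ∩ Set.Ioi lam.ord, ?_, ?_, rfl⟩
        · rintro q ⟨ξ, ⟨hξ1, hξ2⟩, rfl⟩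
          exact Set.mem_prod.2 ⟨hb0sub hξ1, hcl ξ hξ2 (hb0sub hξ1)⟩
        · refine le_trans Cardinal.mk_image_le ?_
          refine le_trans (Cardinal.mk_le_mk_of_subset Set.inter_subset_left) ?_
          rw [← hcof]; exact hb0card
        · intro ξ hξ; exact ⟨hξ.2, hb0sub hξ.1⟩
        · intro x hx
          obtain ⟨ξ, hξb, hξgt⟩ := hb0unb _ (max_lt hx hLα)
          exact ⟨ξ, ⟨hξb, lt_of_le_of_lt (le_max_right _ _) hξgt⟩,
            lt_of_le_of_lt (le_max_left _ _) hξgt⟩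
    rcases lt_or_gt_of_ne hne with hlt | hgt
    · exact hcaseA (pow_eq_self_of_lt_cof hinf
        (Cardinal.one_le_aleph0.trans hσ.aleph0_le) hlt hsup)
    by_cases hpow : lam ^ σ = lam
    · exact hcaseA hpow
    have hmu : ∀ μ : Cardinal.{0}, μ < lam → μ ^ σ < lam := by
      intro μ hμ
      rcases lt_or_ge (μ ^ σ) lam with hm | hm
      · exact hm
      · exfalso
        have hle : μ ^ σ ≤ lam := by
          have := le_ciSup (Cardinal.bddAbove_range
            (fun ν : Set.Iio lam => (ν : Cardinal.{0}) ^ σ)) (⟨μ, hμ⟩ : Set.Iio lam)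
          rwa [hsup] at this
        have heq : μ ^ σ = lam := le_antisymm hle hm
        apply hpow
        refine le_antisymm ?_
          (Cardinal.self_le_power lam (Cardinal.one_le_aleph0.trans hσ.aleph0_le))
        calc lam ^ σ ≤ (μ ^ σ) ^ σ := Cardinal.power_le_power_right heq.ge
          _ = μ ^ (σ * σ) := (Cardinal.power_mul).symm
          _ = μ ^ σ := by rw [Cardinal.mul_eq_self hσ.aleph0_le]
          _ = lam := heq
    -- Case B : cofC lam < σ and all powers below lam are < lam
    refine ⟨fun α => {p : Set (Ordinal.{0} × Ordinal.{0}) | ∃ β < lam.ord,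
      p ⊆ (E α '' Set.Iio β) ×ˢ (E α '' Set.Iio β) ∧ #p ≤ Cardinal.lift.{1} σ}, ?_, ?_⟩
    · intro α hα
      have hsub : {p : Set (Ordinal.{0} × Ordinal.{0}) | ∃ β < lam.ord,
          p ⊆ (E α '' Set.Iio β) ×ˢ (E α '' Set.Iio β) ∧ #p ≤ Cardinal.lift.{1} σ} ⊆
          ⋃ β : Set.Iio lam.ord,
            {p : Set (Ordinal.{0} × Ordinal.{0}) |
              p ⊆ (E α '' Set.Iio β.1) ×ˢ (E α '' Set.Iio β.1) ∧
              #p ≤ Cardinal.lift.{1} σ} := by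
        rintro p ⟨β, hβ, hp⟩
        exact Set.mem_iUnion.2 ⟨⟨β, hβ⟩, hp⟩
      refine le_trans (Cardinal.mk_le_mk_of_subset hsub) ?_
      refine le_trans (Cardinal.mk_iUnion_le _) ?_
      have hbound : ∀ β : Set.Iio lam.ord,
          #{p : Set (Ordinal.{0} × Ordinal.{0}) |
            p ⊆ (E α '' Set.Iio β.1) ×ˢ (E α '' Set.Iio β.1) ∧
            #p ≤ Cardinal.lift.{1} σ} ≤ Cardinal.lift.{1} lam := by
        intro β
        have hb := Cardinal.mk_bounded_subset_le
          ((E α '' Set.Iio β.1) ×ˢ (E α '' Set.Iio β.1)) (Cardinal.lift.{1} σ)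
        have hminf : Cardinal.aleph0 ≤ β.1.card + Cardinal.aleph0 := le_add_self
        have hmlam : β.1.card + Cardinal.aleph0 < lam :=
          Cardinal.add_lt_of_lt hinf (Cardinal.lt_ord.1 β.2) halef_lt
        have hTle : #↥(E α '' Set.Iio β.1) ≤ Cardinal.lift.{1} (β.1.card + Cardinal.aleph0) := by
          refine le_trans Cardinal.mk_image_le ?_
          rw [Ordinal.mk_Iio_ordinal]
          exact Cardinal.lift_le.mpr (self_le_add_right _ _)
        have hprod : #↥((E α '' Set.Iio β.1) ×ˢ (E α '' Set.Iio β.1)) ≤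
            Cardinal.lift.{1} (β.1.card + Cardinal.aleph0) := by
          calc #↥((E α '' Set.Iio β.1) ×ˢ (E α '' Set.Iio β.1))
              = #(↥(E α '' Set.Iio β.1) × ↥(E α '' Set.Iio β.1)) :=
                Cardinal.mk_congr (Equiv.Set.prod _ _)
            _ = #↥(E α '' Set.Iio β.1) * #↥(E α '' Set.Iio β.1) := by
                rw [Cardinal.mk_prod]; simp
            _ ≤ Cardinal.lift.{1} (β.1.card + Cardinal.aleph0) *
                Cardinal.lift.{1} (β.1.card + Cardinal.aleph0) := mul_le_mul' hTle hTle
            _ = Cardinal.lift.{1} (β.1.card + Cardinal.aleph0) := by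
                rw [← Cardinal.lift_mul, Cardinal.mul_eq_self hminf]
        calc #{p : Set (Ordinal.{0} × Ordinal.{0}) |
              p ⊆ (E α '' Set.Iio β.1) ×ˢ (E α '' Set.Iio β.1) ∧
              #p ≤ Cardinal.lift.{1} σ}
            ≤ max #↥((E α '' Set.Iio β.1) ×ˢ (E α '' Set.Iio β.1)) Cardinal.aleph0 ^
                Cardinal.lift.{1} σ := hb
          _ ≤ Cardinal.lift.{1} (β.1.card + Cardinal.aleph0) ^ Cardinal.lift.{1} σ :=
              Cardinal.power_le_power_right
                (max_le hprod (Cardinal.aleph0_le_lift.mpr hminf))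
          _ = Cardinal.lift.{1} ((β.1.card + Cardinal.aleph0) ^ σ) :=
              (Cardinal.lift_power _ _).symm
          _ ≤ Cardinal.lift.{1} lam := Cardinal.lift_le.mpr (hmu _ hmlam).le
      have hIL : #↥(Set.Iio lam.ord) = Cardinal.lift.{1} lam := by
        rw [Ordinal.mk_Iio_ordinal, Cardinal.card_ord]
      refine le_trans (mul_le_mul' hIL.le (ciSup_le' hbound)) ?_
      rw [← Cardinal.lift_mul, Cardinal.mul_eq_self hinf]
    · intro h α hcof hLα hκα hcl
      have hlim : Order.IsSuccLimit α := Ordinal.aleph0_le_cof.1 (by rw [hcof]; exact hσ.aleph0_le)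
      have hEα := hE α hLα.le hκα
      set pre : Ordinal.{0} → Ordinal.{0} := fun y =>
        if hy : ∃ x, x < lam.ord ∧ E α x = y then hy.choose else 0 with hpredef
      have hpre : ∀ y, y < α → pre y < lam.ord ∧ E α (pre y) = y := by
        intro y hy
        have hex : ∃ x, x < lam.ord ∧ E α x = y := by
          obtain ⟨x, hx1, hx2⟩ := hEα.2 y hy
          exact ⟨x, hx1, hx2⟩
        constructor
        · simp only [hpredef, dif_pos hex]; exact hex.choose_spec.1
        · simp only [hpredef, dif_pos hex]; exact hex.choose_spec.2
      obtain ⟨W, hWsub, hWunb, hWcard⟩ := exists_unbounded_subset lam.ord hLlim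
      obtain ⟨U, hUsub, hUunb, hUcard⟩ := exists_unbounded_subset α hlim
      have hU'unb : ∀ x < α, ∃ ξ ∈ U ∩ Set.Ioi lam.ord, x < ξ := by
        intro x hx
        obtain ⟨ξ, hξU, hξgt⟩ := hUunb _ (max_lt hx hLα)
        exact ⟨ξ, ⟨hξU, lt_of_le_of_lt (le_max_right _ _) hξgt⟩,
          lt_of_le_of_lt (le_max_left _ _) hξgt⟩
      have hgood : ∃ w ∈ W, ∀ x < α, ∃ ξ,
          (ξ ∈ U ∩ Set.Ioi lam.ord ∧ pre ξ < w ∧ pre (h ξ) < w) ∧ x < ξ := by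
        by_contra hcon
        push_neg at hcon
        have hcon' : ∀ w : ↥W, ∃ x, x < α ∧ ∀ ξ,
            (ξ ∈ U ∩ Set.Ioi lam.ord ∧ pre ξ < w.1 ∧ pre (h ξ) < w.1) → ξ ≤ x := by
          intro w
          obtain ⟨x, hx1, hx2⟩ := hcon w.1 w.2
          exact ⟨x, hx1, fun ξ hξ => hx2 ξ hξ⟩
        choose t ht1 ht2 using hcon'
        have htsup : sSup (Set.range t) < α := by
          refine sSup_lt_of_card ?_ (by rintro x ⟨n, rfl⟩; exact ht1 n) hlim.pos
          refine lt_of_le_of_lt Cardinal.mk_range_le ?_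
          refine lt_of_le_of_lt hWcard ?_
          rw [hcof]
          exact Cardinal.lift_lt.mpr hgt
        obtain ⟨ξ, hξU', hξgt⟩ := hU'unb _ (max_lt htsup hLα)
        have hξα : ξ < α := hUsub hξU'.1
        have hhξα : h ξ < α := hcl ξ hξU'.2 hξα
        obtain ⟨w, hwW, hwgt⟩ := hWunb _ (max_lt (hpre ξ hξα).1 (hpre (h ξ) hhξα).1)
        have hle := ht2 ⟨w, hwW⟩ ξ ⟨hξU',
          lt_of_le_of_lt (le_max_left _ _) hwgt,
          lt_of_le_of_lt (le_max_right _ _) hwgt⟩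
        have : ξ ≤ sSup (Set.range t) :=
          le_trans hle (le_csSup ⟨α, by rintro x ⟨n, rfl⟩; exact (ht1 n).le⟩ ⟨_, rfl⟩)
        exact absurd (lt_of_le_of_lt this (lt_of_le_of_lt (le_max_left _ _) hξgt))
          (lt_irrefl ξ)
      obtain ⟨w, hwW, hwgood⟩ := hgood
      refine ⟨(fun ξ => (ξ, h ξ)) ''
        {ξ | ξ ∈ U ∩ Set.Ioi lam.ord ∧ pre ξ < w ∧ pre (h ξ) < w}, ?_,
        {ξ | ξ ∈ U ∩ Set.Ioi lam.ord ∧ pre ξ < w ∧ pre (h ξ) < w}, ?_, ?_, rfl⟩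
      · refine ⟨w, hWsub hwW, ?_, ?_⟩
        · rintro q ⟨ξ, hξ, rfl⟩
          have hξα : ξ < α := hUsub hξ.1.1
          have hhξα : h ξ < α := hcl ξ hξ.1.2 hξα
          refine Set.mem_prod.2 ⟨?_, ?_⟩
          · exact ⟨pre ξ, hξ.2.1, (hpre ξ hξα).2⟩
          · exact ⟨pre (h ξ), hξ.2.2, (hpre (h ξ) hhξα).2⟩
        · refine le_trans Cardinal.mk_image_le ?_
          refine le_trans (Cardinal.mk_le_mk_of_subset
            (fun ξ hξ => hξ.1.1 : _ ⊆ U)) ?_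
          rw [← hcof]; exact hUcard
      · intro ξ hξ
        exact ⟨hξ.1.2, hUsub hξ.1.1⟩
      · intro x hx
        obtain ⟨ξ, hξ1, hξ2⟩ := hwgood x hx
        exact ⟨ξ, hξ1, hξ2⟩
  obtain ⟨Q, hQcard, hQcover⟩ := hQ
  -- the diamond sequence
  refine ⟨fun α => (fun p : Set (Ordinal.{0} × Ordinal.{0}) =>
      {x | x < α ∧ ∃ q ∈ p, x ∈ E q.1 '' X q.2}) '' Q α, ?_, ?_⟩
  · intro α hα
    constructor
    · rintro W ⟨p, -, rfl⟩
      intro x hx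
      exact hx.1
    · exact le_trans Cardinal.mk_image_le (hQcard α hα.1)
  · intro Z hZsub
    set hZf : Ordinal.{0} → Ordinal.{0} := fun β =>
      if h : ∃ γ, γ < succOrd lam ∧ E β '' X γ = Z ∩ Set.Iio β then h.choose else 0
      with hZfdef
    have hZlt : ∀ β, hZf β < succOrd lam := by
      intro β
      by_cases h : ∃ γ, γ < succOrd lam ∧ E β '' X γ = Z ∩ Set.Iio β
      · simp only [hZfdef, dif_pos h]; exact h.choose_spec.1
      · simp only [hZfdef, dif_neg h]; exact hκlim.pos
    have hZspec : ∀ β, lam.ord < β → β < succOrd lam →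
        E β '' X (hZf β) = Z ∩ Set.Iio β := by
      intro β h1 h2
      have hex : ∃ γ, γ < succOrd lam ∧ E β '' X γ = Z ∩ Set.Iio β := by
        obtain ⟨γ, hγκ, hγ⟩ := hX {x | x < lam.ord ∧ E β x ∈ Z ∩ Set.Iio β}
          (fun x hx => hx.1)
        refine ⟨γ, hγκ, ?_⟩
        rw [hγ]
        ext y
        constructor
        · rintro ⟨x, ⟨hx1, hx2⟩, rfl⟩; exact hx2
        · intro hy
          obtain ⟨x, hxL, hxy⟩ := (hE β h1.le h2).2 y hy.2
          exact ⟨x, ⟨hxL, by rw [hxy]; exact hy⟩, hxy⟩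
      simp only [hZfdef, dif_pos hex]
      exact hex.choose_spec.2
    refine ⟨{α | lam.ord < α ∧ α < succOrd lam ∧
      ∀ β, lam.ord < β → β < α → hZf β < α},
      club_of_closure lam hinf hZf hZlt, ?_⟩
    rintro α ⟨hαC, hαS⟩
    obtain ⟨p, hpQ, b, hbsub, hbunb, hpeq⟩ :=
      hQcover hZf α hαS.2 hαC.1 hαC.2.1 hαC.2.2
    refine ⟨p, hpQ, ?_⟩
    ext x
    constructor
    · rintro ⟨hxα, q, hq, hximg⟩
      rw [hpeq] at hq
      obtain ⟨ξ, hξb, rfl⟩ := hq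
      have hξIoo := hbsub hξb
      have := hZspec ξ hξIoo.1 (lt_trans hξIoo.2 hαC.2.1)
      rw [this] at hximg
      exact ⟨hximg.1, hxα⟩
    · rintro ⟨hxZ, hxα⟩
      obtain ⟨ξ, hξb, hxξ⟩ := hbunb x hxα
      have hξIoo := hbsub hξb
      refine ⟨hxα, (ξ, hZf ξ), ?_, ?_⟩
      · rw [hpeq]; exact ⟨ξ, hξb, rfl⟩
      · rw [hZspec ξ hξIoo.1 (lt_trans hξIoo.2 hαC.2.1)]
        exact ⟨hxZ, hxξ⟩


end DiamondSurvey
end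
end

section
/- Let λ be an infinite cardinal and let T ⊆ S ⊆ λ⁺ with both T and S stationary. If ◊*_S holds, then ◊_T holds. -/
noncomputable section

namespace DiamondSurvey

open Cardinal

section Aux

variable {lam : Cardinal.{0}} (hinf : Cardinal.aleph0 ≤ lam)
include hinf

lemma cof_succOrd : (succOrd lam).cof = Order.succ lam :=
  (Cardinal.isRegular_succ hinf).cof_eq

omit hinf in
lemma lt_succOrd {o : Ordinal.{0}} : o < succOrd lam ↔ o.card ≤ lam := by
  rw [succOrd, Cardinal.lt_ord, Order.lt_succ_iff]

lemma succOrd_isLimit : Order.IsSuccLimit (succOrd lam) :=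
  Cardinal.isSuccLimit_ord (hinf.trans (Order.le_succ _))

lemma add_one_lt_succOrd {o : Ordinal.{0}} (h : o < succOrd lam) : o + 1 < succOrd lam := by
  rw [Ordinal.add_one_eq_succ]
  exact (succOrd_isLimit hinf).succ_lt h

omit hinf in
lemma bddAbove_of_lt {s : Set Ordinal.{0}} {κ : Ordinal.{0}} (h : ∀ x ∈ s, x < κ) :
    BddAbove s := ⟨κ, fun x hx => (h x hx).le⟩

lemma iSup_lt_succOrd {ι : Type} (f : ι → Ordinal.{0}) (hι : #ι ≤ lam)
    (hf : ∀ i, f i < succOrd lam) : (⨆ i, f i) < succOrd lam :=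
  Ordinal.iSup_lt_ord (by rw [cof_succOrd hinf]; exact hι.trans_lt (Order.lt_succ _)) hf

lemma clubInter {ι : Type} [Nonempty ι] {C : ι → Set Ordinal.{0}}
    (hcard : #ι ≤ lam) (hC : ∀ i, IsClubIn (C i) (succOrd lam)) :
    IsClubIn (⋂ i, C i) (succOrd lam) := by
  refine ⟨(Set.iInter_subset C (Classical.arbitrary ι)).trans (hC _).1, ?_, ?_⟩
  · intro α hα
    have hu : ∀ (i : ι) (x : Ordinal.{0}), ∃ y, x < succOrd lam → y ∈ C i ∧ x ≤ y := by
      intro i x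
      by_cases hx : x < succOrd lam
      · obtain ⟨y, hy, hxy⟩ := (hC i).2.1 x hx
        exact ⟨y, fun _ => ⟨hy, hxy⟩⟩
      · exact ⟨0, fun h => absurd h hx⟩
    choose u hu using hu
    set b : ℕ → Ordinal.{0} := fun n => Nat.rec α (fun _ x => ⨆ i, u i (x + 1)) n with hbdef
    have hb0 : b 0 = α := rfl
    have hbs : ∀ n, b (n + 1) = ⨆ i, u i (b n + 1) := fun n => rfl
    have hblt : ∀ n, b n < succOrd lam := by
      intro n
      induction n with
      | zero => exact hα
      | succ n ih =>
        rw [hbs]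
        refine iSup_lt_succOrd hinf _ hcard (fun i => ?_)
        exact (hC i).1 (hu i _ (add_one_lt_succOrd hinf ih)).1
    have hstep : ∀ n (i : ι), b n + 1 ≤ u i (b n + 1) ∧ u i (b n + 1) ≤ b (n + 1) := by
      intro n i
      have h1 : b n + 1 < succOrd lam := add_one_lt_succOrd hinf (hblt n)
      refine ⟨(hu i _ h1).2, ?_⟩
      rw [hbs]
      refine le_ciSup (bddAbove_of_lt (κ := succOrd lam) (fun x hx => ?_)) i
      obtain ⟨j, rfl⟩ := hx
      exact (hC j).1 (hu j _ h1).1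
    set β : Ordinal.{0} := ⨆ n, b n with hβ
    have hβlt : β < succOrd lam :=
      iSup_lt_succOrd hinf _ (by rw [Cardinal.mk_nat]; exact hinf) hblt
    have hbleβ : ∀ n, b n ≤ β := fun n => le_ciSup (bddAbove_of_lt (κ := succOrd lam) fun x hx => by
      obtain ⟨m, rfl⟩ := hx; exact hblt m) n
    refine ⟨β, ?_, hb0 ▸ hbleβ 0⟩
    rw [Set.mem_iInter]
    intro i
    set s : Set Ordinal.{0} := Set.range (fun n => u i (b n + 1)) with hs
    have hssub : s ⊆ C i := by
      rintro x ⟨n, rfl⟩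
      exact (hu i _ (add_one_lt_succOrd hinf (hblt n))).1
    have hsup : sSup s = β := by
      apply le_antisymm
      · refine csSup_le ⟨_, ⟨0, rfl⟩⟩ ?_
        rintro x ⟨n, rfl⟩
        exact ((hstep n i).2).trans (hbleβ (n + 1))
      · refine ciSup_le fun n => ?_
        have h1 : b n ≤ b n + 1 := by
          rw [Ordinal.add_one_eq_succ]; exact (Order.lt_succ _).le
        calc b n ≤ u i (b n + 1) := h1.trans (hstep n i).1
          _ ≤ sSup s := le_csSup (bddAbove_of_lt (κ := succOrd lam) fun x hx =>
              (hC i).1 (hssub hx)) ⟨n, rfl⟩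
    have := (hC i).2.2 s hssub ⟨_, ⟨0, rfl⟩⟩ (hsup ▸ hβlt)
    rwa [hsup] at this
  · intro s hs hne hlt
    rw [Set.mem_iInter]
    intro i
    exact (hC i).2.2 s (fun x hx => Set.mem_iInter.mp (hs hx) i) hne hlt

lemma ord_pos' : 0 < lam.ord := by
  rw [Cardinal.lt_ord, Ordinal.card_zero]
  exact lt_of_lt_of_le Cardinal.aleph0_pos hinf

lemma code_lt {β η : Ordinal.{0}} (hβ : β < succOrd lam) (hη : η < lam.ord) :
    lam.ord * β + η < succOrd lam := by
  rw [lt_succOrd] at hβ ⊢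
  rw [Ordinal.card_add, Ordinal.card_mul, Cardinal.card_ord]
  have hηc : η.card ≤ lam := (Cardinal.lt_ord.mp hη).le
  calc lam * β.card + η.card ≤ lam * lam + lam :=
        add_le_add (mul_le_mul_right hβ _) hηc
    _ = lam := by rw [Cardinal.mul_eq_self hinf, Cardinal.add_eq_self hinf]

lemma decode {β β' η η' : Ordinal.{0}} (hη : η < lam.ord) (hη' : η' < lam.ord)
    (h : lam.ord * β + η = lam.ord * β' + η') : β = β' ∧ η = η' := by
  have h0 : lam.ord ≠ 0 := (ord_pos' hinf).ne'
  have hdiv : ∀ (b e : Ordinal.{0}), e < lam.ord → (lam.ord * b + e) / lam.ord = b := by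
    intro b e he
    rw [Ordinal.mul_add_div _ h0, Ordinal.div_eq_zero_of_lt he, add_zero]
  have hb : β = β' := by
    rw [← hdiv β η hη, h, hdiv β' η' hη']
  refine ⟨hb, ?_⟩
  have h2 := congrArg (· % lam.ord) h
  simpa only [Ordinal.mul_add_mod_self, Ordinal.mod_eq_of_lt hη,
    Ordinal.mod_eq_of_lt hη'] using h2

lemma closedClub : IsClubIn {α | α < succOrd lam ∧ lam.ord * α = α} (succOrd lam) := by
  have hnorm : Order.IsNormal (lam.ord * ·) := Ordinal.isNormal_mul_right (ord_pos' hinf)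
  refine ⟨fun x hx => hx.1, ?_, ?_⟩
  · intro α hα
    set b : ℕ → Ordinal.{0} := fun n => Nat.rec α (fun _ x => lam.ord * x + 1) n with hbdef
    have hbs : ∀ n, b (n + 1) = lam.ord * b n + 1 := fun n => rfl
    have hblt : ∀ n, b n < succOrd lam := by
      intro n
      induction n with
      | zero => exact hα
      | succ n ih =>
        rw [hbs]
        refine add_one_lt_succOrd hinf ?_
        have := code_lt hinf ih (ord_pos' hinf)
        simpa using this
    set β : Ordinal.{0} := ⨆ n, b n with hβ
    have hβlt : β < succOrd lam :=
      iSup_lt_succOrd hinf _ (by rw [Cardinal.mk_nat]; exact hinf) hblt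
    have hbleβ : ∀ n, b n ≤ β := fun n => le_ciSup (bddAbove_of_lt (κ := succOrd lam) fun x hx => by
      obtain ⟨m, rfl⟩ := hx; exact hblt m) n
    refine ⟨β, ⟨hβlt, ?_⟩, hbleβ 0⟩
    apply le_antisymm
    · have hmap : lam.ord * β = ⨆ n, lam.ord * b n := hnorm.map_iSup (bddAbove_of_lt (κ := succOrd lam) fun x hx => by
        obtain ⟨m, rfl⟩ := hx; exact hblt m)
      rw [hmap]
      refine ciSup_le fun n => ?_
      have : lam.ord * b n ≤ b (n + 1) := by
        rw [hbs, Ordinal.add_one_eq_succ]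
        exact (Order.lt_succ _).le
      exact this.trans (hbleβ (n + 1))
    · exact Ordinal.le_mul_right β (ord_pos' hinf)
  · intro s hs hne hlt
    refine ⟨hlt, ?_⟩
    have hbdd : BddAbove s := bddAbove_of_lt fun x hx => (hs hx).1
    have hmap := hnorm.map_sSup hne hbdd
    have himg : (lam.ord * ·) '' s = s := by
      have : ∀ x ∈ s, lam.ord * x = x := fun x hx => (hs hx).2
      calc (lam.ord * ·) '' s = id '' s := Set.image_congr this
        _ = s := Set.image_id s
    rw [hmap, himg]

end Aux

theorem stmt5 (lam : Cardinal.{0}) (hinf : Cardinal.aleph0 ≤ lam)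
    (T S : Set Ordinal.{0}) (hTS : T ⊆ S) (hSsub : S ⊆ Set.Iio (succOrd lam))
    (hT : IsStationaryIn T (succOrd lam)) (hS : IsStationaryIn S (succOrd lam))
    (h : DiamondStar lam S) : Diamond lam T := by
  classical
  obtain ⟨𝒜, h𝒜, hguess⟩ := h
  set B : Ordinal.{0} → Set (Set Ordinal.{0}) := fun α => insert ∅ (𝒜 α) with hBdef
  have hBcard : ∀ α ∈ S, #(B α) ≤ Cardinal.lift.{1} lam := by
    intro α hα
    have h1 : #(B α) ≤ #(𝒜 α) + 1 := Cardinal.mk_insert_le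
    have h2 : Cardinal.lift.{1} lam + 1 = Cardinal.lift.{1} lam :=
      Cardinal.add_one_eq (Cardinal.aleph0_le_lift.mpr hinf)
    exact h1.trans (by rw [← h2]; exact add_le_add_left (h𝒜 α hα).2 1)
  have henum : ∀ α : Ordinal.{0}, ∃ g : Ordinal.{0} → Set Ordinal.{0},
      α ∈ S → (∀ η, g η ∈ B α) ∧ ∀ X ∈ B α, ∃ η < lam.ord, g η = X := by
    intro α
    by_cases hα : α ∈ S
    · have hle : #(B α) ≤ #(Set.Iio lam.ord) := by
        rw [Ordinal.mk_Iio_ordinal, Cardinal.card_ord]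
        exact hBcard α hα
      obtain ⟨e⟩ := (Cardinal.le_def _ _).mp hle
      have hne : Nonempty (B α) := ⟨⟨∅, Set.mem_insert _ _⟩⟩
      refine ⟨fun η => if hη : η < lam.ord
          then ((Function.invFun e ⟨η, hη⟩ : B α) : Set Ordinal.{0}) else ∅,
        fun _ => ⟨?_, ?_⟩⟩
      · intro η
        by_cases hη : η < lam.ord
        · simp only [dif_pos hη]; exact (Function.invFun e ⟨η, hη⟩).2
        · simp only [dif_neg hη]; exact Set.mem_insert _ _
      · intro X hX
        refine ⟨(e ⟨X, hX⟩ : Set.Iio lam.ord), (e ⟨X, hX⟩).2, ?_⟩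
        have hlt : ((e ⟨X, hX⟩ : Set.Iio lam.ord) : Ordinal.{0}) < lam.ord := (e ⟨X, hX⟩).2
        dsimp only
        simp only [dif_pos hlt, Subtype.coe_eta,
          Function.leftInverse_invFun e.injective ⟨X, hX⟩]
    · exact ⟨fun _ => ∅, fun h => absurd h hα⟩
  choose g hg using henum
  set A : Ordinal.{0} → Ordinal.{0} → Set Ordinal.{0} :=
    fun η α => {β | β < α ∧ lam.ord * β + η ∈ g α η} with hAdef
  suffices hkey : ∃ η, η < lam.ord ∧ ∀ Z, Z ⊆ Set.Iio (succOrd lam) →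
      IsStationaryIn {α | α ∈ T ∧ Z ∩ Set.Iio α = A η α} (succOrd lam) by
    obtain ⟨η, -, hst⟩ := hkey
    exact ⟨A η, fun α _ β hβ => hβ.1, hst⟩
  by_contra hcon
  push_neg at hcon
  have hcon' : ∀ η : Ordinal.{0}, ∃ Z Cc, η < lam.ord →
      Z ⊆ Set.Iio (succOrd lam) ∧ IsClubIn Cc (succOrd lam) ∧
      ∀ α, α ∈ T → α ∈ Cc → Z ∩ Set.Iio α ≠ A η α := by
    intro η
    by_cases hη : η < lam.ord
    · obtain ⟨Zc, hZsub, hZns⟩ := hcon η hη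
      rw [IsStationaryIn] at hZns
      push_neg at hZns
      obtain ⟨Cc, hCc, hempty⟩ := hZns
      exact ⟨Zc, Cc, fun _ => ⟨hZsub, hCc, fun α hαT hαC heq =>
        Set.eq_empty_iff_forall_notMem.mp hempty α ⟨⟨hαT, heq⟩, hαC⟩⟩⟩
    · exact ⟨∅, ∅, fun h => absurd h hη⟩
  choose Z Cc hZC using hcon'
  set Zs : Set Ordinal.{0} :=
    {x | ∃ η β, η < lam.ord ∧ β ∈ Z η ∧ x = lam.ord * β + η} with hZsdef
  have hZssub : Zs ⊆ Set.Iio (succOrd lam) := by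
    rintro x ⟨η, β, hη, hβ, rfl⟩
    exact code_lt hinf ((hZC η hη).1 hβ) hη
  obtain ⟨Cst, hCst, hCstmem⟩ := hguess Zs hZssub
  have hσne : Nonempty lam.ord.ToType :=
    Ordinal.toType_nonempty_iff_ne_zero.mpr (ord_pos' hinf).ne'
  set vv : lam.ord.ToType → Ordinal.{0} :=
    fun i => ((Ordinal.ToType.mk (o := lam.ord)).symm i : Ordinal.{0}) with hvvdef
  have hvv_lt : ∀ i, vv i < lam.ord := fun i => ((Ordinal.ToType.mk (o := lam.ord)).symm i).2
  set F : lam.ord.ToType ⊕ Bool → Set Ordinal.{0} := Sum.elim (fun i => Cc (vv i))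
    (fun b => if b then Cst else {α | α < succOrd lam ∧ lam.ord * α = α}) with hFdef
  have hFclub : ∀ i, IsClubIn (F i) (succOrd lam) := by
    rintro (i | b)
    · exact (hZC _ (hvv_lt i)).2.1
    · cases b
      · exact closedClub hinf
      · exact hCst
  have hcard2 : #(lam.ord.ToType ⊕ Bool) ≤ lam := by
    have h2lam : (2 : Cardinal.{0}) ≤ lam :=
      le_trans (by exact_mod_cast (Cardinal.nat_lt_aleph0 2).le) hinf
    rw [Cardinal.mk_sum, Cardinal.lift_id, Cardinal.lift_id, Cardinal.mk_toType,
      Cardinal.card_ord, Cardinal.mk_bool, Cardinal.add_eq_left hinf h2lam]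
  obtain ⟨α, hαT, hαC⟩ := hT _ (clubInter hinf hcard2 hFclub)
  have hαS := hTS hαT
  have hmem : ∀ i, α ∈ F i := fun i => Set.mem_iInter.mp hαC i
  have hαCst : α ∈ Cst := by have := hmem (Sum.inr true); simpa [hFdef] using this
  have hαD : lam.ord * α = α := by
    have := hmem (Sum.inr false); simp only [hFdef, Sum.elim_inr, if_neg] at this
    · exact this.2
  have hZα : Zs ∩ Set.Iio α ∈ B α := Set.mem_insert_of_mem _ (hCstmem α ⟨hαCst, hαS⟩)
  obtain ⟨η₀, hη₀, hgη₀⟩ := (hg α hαS).2 _ hZα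
  have hαCc : α ∈ Cc η₀ := by
    have := hmem (Sum.inl ((Ordinal.ToType.mk (o := lam.ord)) ⟨η₀, hη₀⟩))
    simpa [hFdef, hvvdef] using this
  refine (hZC η₀ hη₀).2.2 α hαT hαCc ?_
  ext β
  simp only [hAdef, Set.mem_inter_iff, Set.mem_Iio, Set.mem_setOf_eq, hgη₀]
  constructor
  · rintro ⟨hβZ, hβα⟩
    refine ⟨hβα, ⟨η₀, β, hη₀, hβZ, rfl⟩, ?_⟩
    calc lam.ord * β + η₀ < lam.ord * β + lam.ord := (add_lt_add_iff_left _).mpr hη₀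
      _ = lam.ord * (β + 1) := (mul_add_one lam.ord β).symm
      _ ≤ lam.ord * α := by
          refine mul_le_mul_right ?_ _
          rwa [Ordinal.add_one_eq_succ, Order.succ_le_iff]
      _ = α := hαD
  · rintro ⟨hβα, ⟨η', β', hη', hβ', hcode⟩, -⟩
    obtain ⟨hb, he⟩ := decode hinf hη₀ hη' hcode
    subst hb; subst he
    exact ⟨hβ', hβα⟩


end DiamondSurvey
end
end

section
/- Let λ be an infinite cardinal with λ^{ℵ₀} = λ. Then for every stationary S ⊆ λ⁺, ◊*_S holds if and only if ◊⁺_S holds. -/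
noncomputable section

namespace DiamondSurvey

open Cardinal

private lemma iInter_club {κ : Ordinal.{0}} (hκ : Cardinal.aleph0 < κ.cof) (hlim : Order.IsSuccLimit κ)
    (C : ℕ → Set Ordinal.{0}) (h : ∀ n, IsClubIn (C n) κ) : IsClubIn (⋂ n, C n) κ := by
  have hnat : (#ℕ : Cardinal.{0}) < κ.cof := by rwa [Cardinal.mk_nat]
  refine ⟨fun x hx => (h 0).1 (Set.mem_iInter.1 hx 0), ?_, ?_⟩
  · intro α hα
    set g : ℕ → Ordinal.{0} → Ordinal.{0} := fun n γ =>
      if hγ : Order.succ γ < κ then ((h n).2.1 (Order.succ γ) hγ).choose else 0 with hgdef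
    have hg : ∀ n γ, γ < κ → g n γ ∈ C n ∧ Order.succ γ ≤ g n γ := by
      intro n γ hγ
      have hsγ : Order.succ γ < κ := hlim.succ_lt hγ
      simp only [hgdef, dif_pos hsγ]
      obtain ⟨h1, h2⟩ := ((h n).2.1 (Order.succ γ) hsγ).choose_spec
      exact ⟨h1, h2⟩
    set e : Ordinal.{0} → Ordinal.{0} := fun γ => ⨆ n, g n γ with hedef
    have hglt : ∀ n γ, γ < κ → g n γ < κ := fun n γ hγ => (h n).1 (hg n γ hγ).1
    have helt : ∀ γ, γ < κ → e γ < κ := fun γ hγ =>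
      Ordinal.iSup_lt_ord hnat (fun n => hglt n γ hγ)
    have hge : ∀ n γ, g n γ ≤ e γ := fun n γ => le_ciSup (Ordinal.bddAbove_range _) n
    set β : ℕ → Ordinal.{0} := fun k => Nat.rec α (fun _ ih => e ih) k with hβdef
    have hβlt : ∀ k, β k < κ := by
      intro k; induction k with
      | zero => exact hα
      | succ k ih => exact helt _ ih
    have hβsucc : ∀ k, β (k + 1) = e (β k) := fun k => rfl
    set β' : Ordinal.{0} := ⨆ k, β k with hβ'def
    have hβ'lt : β' < κ := Ordinal.iSup_lt_ord hnat hβlt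
    have hβle : ∀ k, β k ≤ β' := fun k => le_ciSup (Ordinal.bddAbove_range _) k
    have hmem : ∀ n, β' ∈ C n := by
      intro n
      have hsup : sSup (Set.range fun k => g n (β k)) = β' := by
        show (⨆ k, g n (β k)) = β'
        apply le_antisymm
        · refine ciSup_le fun k => ?_
          calc g n (β k) ≤ e (β k) := hge n (β k)
            _ = β (k + 1) := (hβsucc k).symm
            _ ≤ β' := hβle (k + 1)
        · refine ciSup_le fun k => ?_
          calc β k ≤ Order.succ (β k) := (Order.le_succ _)
            _ ≤ g n (β k) := (hg n (β k) (hβlt k)).2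
            _ ≤ ⨆ k, g n (β k) := le_ciSup (Ordinal.bddAbove_range _) k
      have := (h n).2.2 (Set.range fun k => g n (β k))
        (by rintro x ⟨k, rfl⟩; exact (hg n (β k) (hβlt k)).1)
        (Set.range_nonempty _) (by rw [hsup]; exact hβ'lt)
      rwa [hsup] at this
    exact ⟨β', Set.mem_iInter.2 hmem, (hβle 0)⟩
  · intro s hs hne hsup
    exact Set.mem_iInter.2 fun n =>
      (h n).2.2 s (hs.trans (Set.iInter_subset _ n)) hne hsup

theorem stmt6 (lam : Cardinal.{0}) (hinf : Cardinal.aleph0 ≤ lam)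
    (hpow : lam ^ Cardinal.aleph0 = lam) :
    ∀ S ⊆ Set.Iio (succOrd lam), IsStationaryIn S (succOrd lam) →
      (DiamondStar lam S ↔ DiamondPlus lam S) := by
  classical
  intro S hS hSstat
  set κ := succOrd lam with hκdef
  have hreg : (Order.succ lam).IsRegular := Cardinal.isRegular_succ hinf
  have hcof : κ.cof = Order.succ lam := hreg.cof_eq
  have haleph : Cardinal.aleph0 < κ.cof := by
    rw [hcof]; exact hinf.trans_lt (Order.lt_succ lam)
  have hlim : Order.IsSuccLimit κ := Cardinal.isSuccLimit_ord (hinf.trans (Order.le_succ lam))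
  constructor
  · rintro ⟨A, hA1, hA2⟩
    refine ⟨fun α => {X | ∃ f : ℕ → Set Ordinal.{0},
      (∀ n, f n ∈ insert (Set.Iio α) (A α)) ∧ X = ⋂ n, f n}, ?_, ?_⟩
    · intro α hα
      obtain ⟨hsub, hcard⟩ := hA1 α hα
      constructor
      · rintro X ⟨f, hf, rfl⟩
        refine (Set.iInter_subset f 0).trans ?_
        rcases hf 0 with h | h
        · rw [h]
        · exact hsub _ h
      · -- cardinality bound
        have hsubr : {X | ∃ f : ℕ → Set Ordinal.{0},
            (∀ n, f n ∈ insert (Set.Iio α) (A α)) ∧ X = ⋂ n, f n} ⊆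
            Set.range (fun f : ℕ → (insert (Set.Iio α) (A α) : Set (Set Ordinal.{0})) =>
              ⋂ n, (f n : Set Ordinal.{0})) := by
          rintro X ⟨f, hf, rfl⟩
          exact ⟨fun n => ⟨f n, hf n⟩, rfl⟩
        have haleph1 : Cardinal.aleph0 ≤ Cardinal.lift.{1} lam := by
          rw [← Cardinal.lift_aleph0.{1,0}]; exact Cardinal.lift_le.2 hinf
        have hTcard : #(insert (Set.Iio α) (A α) : Set (Set Ordinal.{0})) ≤
            Cardinal.lift.{1} lam := by
          refine Cardinal.mk_insert_le.trans ?_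
          calc #(A α) + 1 ≤ Cardinal.lift.{1} lam + 1 := by gcongr
            _ = Cardinal.lift.{1} lam := Cardinal.add_one_eq haleph1
        calc #{X | ∃ f : ℕ → Set Ordinal.{0},
              (∀ n, f n ∈ insert (Set.Iio α) (A α)) ∧ X = ⋂ n, f n}
            ≤ #(ℕ → (insert (Set.Iio α) (A α) : Set (Set Ordinal.{0}))) :=
              (Cardinal.mk_le_mk_of_subset hsubr).trans (Cardinal.mk_range_le)
          _ = #(insert (Set.Iio α) (A α) : Set (Set Ordinal.{0})) ^
                (Cardinal.aleph0 : Cardinal.{1}) := by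
              rw [Cardinal.mk_arrow]
              simp
          _ ≤ Cardinal.lift.{1} lam ^ (Cardinal.aleph0 : Cardinal.{1}) :=
              Cardinal.power_le_power_right hTcard
          _ = Cardinal.lift.{1} lam := by
              rw [← Cardinal.lift_aleph0.{1,0}, ← Cardinal.lift_power, hpow]
    · intro Z hZ
      set F : Set Ordinal.{0} → Set Ordinal.{0} := fun Z' =>
        if h : Z' ⊆ Set.Iio κ then (hA2 Z' h).choose else ∅ with hFdef
      have hF : ∀ Z', (h : Z' ⊆ Set.Iio κ) →
          IsClubIn (F Z') κ ∧ ∀ α ∈ F Z' ∩ S, Z' ∩ Set.Iio α ∈ A α := by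
        intro Z' h
        simp only [hFdef, dif_pos h]
        exact (hA2 Z' h).choose_spec
      set Cs : ℕ → Set Ordinal.{0} := fun n => Nat.rec (F Z) (fun _ ih => F ih) n with hCsdef
      have hCclub : ∀ n, IsClubIn (Cs n) κ := by
        intro n; induction n with
        | zero => exact (hF Z hZ).1
        | succ n ih => exact (hF (Cs n) ih.1).1
      have hCg0 : ∀ α ∈ Cs 0 ∩ S, Z ∩ Set.Iio α ∈ A α := (hF Z hZ).2
      have hCg : ∀ n, ∀ α ∈ Cs (n + 1) ∩ S, Cs n ∩ Set.Iio α ∈ A α :=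
        fun n => (hF (Cs n) (hCclub n).1).2
      refine ⟨⋂ n, Cs n, iInter_club haleph hlim Cs hCclub, ?_⟩
      rintro α ⟨hαD, hαS⟩
      have hmemn : ∀ n, α ∈ Cs n := Set.mem_iInter.1 hαD
      constructor
      · exact ⟨fun _ => Z ∩ Set.Iio α,
          fun n => Set.mem_insert_of_mem _ (hCg0 α ⟨hmemn 0, hαS⟩),
          (Set.iInter_const _).symm⟩
      · exact ⟨fun n => Cs n ∩ Set.Iio α,
          fun n => Set.mem_insert_of_mem _ (hCg n α ⟨hmemn (n + 1), hαS⟩),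
          (Set.iInter_inter _ _)⟩
  · rintro ⟨A, h1, h2⟩
    exact ⟨A, h1, fun Z hZ => (h2 Z hZ).imp fun C hC =>
      ⟨hC.1, fun α hα => (hC.2 α hα).1⟩⟩


end DiamondSurvey
end
end

section
/- Let λ be a singular cardinal and let S ⊆ λ⁺ be stationary. If the ideal I[S;λ] contains a stationary subset of λ⁺, then ♣⁻_S holds. -/
noncomputable section

namespace DiamondSurvey

open Cardinal

-- ### auxiliary lemmas

lemma bddAbove_of_subset_Iio {s : Set Ordinal.{0}} {o : Ordinal.{0}}
    (h : s ⊆ Set.Iio o) : BddAbove s :=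
  ⟨o, fun _ hx => (h hx).le⟩

lemma sSup_eq_of_unb {s : Set Ordinal.{0}} {o : Ordinal.{0}}
    (hsub : s ⊆ Set.Iio o) (h0 : 0 < o)
    (h : ∀ b < o, ∃ x ∈ s, b < x) : sSup s = o := by
  obtain ⟨x0, hx0, -⟩ := h 0 h0
  refine le_antisymm (csSup_le ⟨x0, hx0⟩ fun x hx => (hsub hx).le) ?_
  by_contra hlt
  push_neg at hlt
  obtain ⟨x, hx, hgt⟩ := h _ hlt
  exact absurd (le_csSup (bddAbove_of_subset_Iio hsub) hx) (not_le.2 hgt)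

lemma unb_of_sSup_eq {s : Set Ordinal.{0}} {o : Ordinal.{0}}
    (hsub : s ⊆ Set.Iio o) (h0 : 0 < o) (heq : sSup s = o) :
    ∀ b < o, ∃ x ∈ s, b < x := by
  intro b hb
  by_contra hcon
  push_neg at hcon
  rcases s.eq_empty_or_nonempty with rfl | hne
  · rw [csSup_empty] at heq
    exact h0.ne heq
  · exact absurd (heq ▸ csSup_le hne hcon) (not_le.2 hb)

lemma sSup_lt_of_card_lt {s : Set Ordinal.{0}} {o : Ordinal.{0}}
    (hsub : s ⊆ Set.Iio o) (hcard : #s < Cardinal.lift.{1} o.cof) :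
    sSup s < o := by
  obtain ⟨c₀, hc₀lt, hc₀eq⟩ := Cardinal.lt_lift_iff.mp hcard
  have hmk : #s = #(ULift.{1} c₀.out) := by
    rw [Cardinal.mk_uLift, Cardinal.mk_out]; exact hc₀eq.symm
  obtain ⟨e⟩ := Cardinal.eq.mp hmk
  set g : c₀.out → Ordinal.{0} := fun k => (e.symm ⟨k⟩ : s).1 with hg
  have hrange : Set.range g = s := by
    ext x
    constructor
    · rintro ⟨k, rfl⟩; exact (e.symm ⟨k⟩).2
    · intro hx
      refine ⟨(e ⟨x, hx⟩).down, ?_⟩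
      show ((e.symm (e ⟨x, hx⟩) : s) : Ordinal.{0}) = x
      rw [Equiv.symm_apply_apply]
  have : sSup s = iSup g := by rw [← hrange, ← sSup_range]
  rw [this]
  refine Ordinal.iSup_lt_ord ?_ fun k => hsub (hrange.subset (Set.mem_range_self k))
  rw [Cardinal.mk_out]; exact hc₀lt

/-- accumulation points -/
def AccIn (W : Set Ordinal.{0}) (κ : Ordinal.{0}) : Set Ordinal.{0} :=
  {δ | δ < κ ∧ 0 < δ ∧ sSup (W ∩ Set.Iio δ) = δ}

lemma accIn_unb {W : Set Ordinal.{0}} {δ : Ordinal.{0}} (h : δ ∈ AccIn W κ) :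
    ∀ b < δ, ∃ x ∈ W, b < x ∧ x < δ := by
  intro b hb
  obtain ⟨x, hx, hbx⟩ := unb_of_sSup_eq (Set.inter_subset_right) h.2.1 h.2.2 b hb
  exact ⟨x, hx.1, hbx, hx.2⟩

lemma exists_omega_lim {W : Set Ordinal.{0}} {κ : Ordinal.{0}}
    (hκ : Cardinal.aleph0 < κ.cof) (hWsub : W ⊆ Set.Iio κ)
    (hW : ∀ b < κ, ∃ x ∈ W, b < x) {α : Ordinal.{0}} (hα : α < κ) :
    ∃ δ ∈ AccIn W κ, α < δ := by
  have step : ∀ b : {b : Ordinal.{0} // b < κ}, ∃ x, x ∈ W ∧ b.1 < x ∧ x < κ := by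
    rintro ⟨b, hb⟩
    obtain ⟨x, hx, hbx⟩ := hW b hb
    exact ⟨x, hx, hbx, hWsub hx⟩
  set g : {b : Ordinal.{0} // b < κ} → {b : Ordinal.{0} // b < κ} :=
    fun b => ⟨(step b).choose, (step b).choose_spec.2.2⟩ with hgdef
  have hgW : ∀ b, (g b).1 ∈ W ∧ b.1 < (g b).1 := fun b =>
    ⟨(step b).choose_spec.1, (step b).choose_spec.2.1⟩
  set x : ℕ → {b : Ordinal.{0} // b < κ} :=
    fun n => Nat.rec (g ⟨α, hα⟩) (fun _ ih => g ih) n with hxdef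
  have hx0 : α < (x 0).1 := (hgW ⟨α, hα⟩).2
  have hxsucc : ∀ n, (x n).1 < (x (n+1)).1 := fun n => (hgW (x n)).2
  have hxW : ∀ n, (x n).1 ∈ W := by
    intro n
    cases n with
    | zero => exact (hgW ⟨α, hα⟩).1
    | succ m => exact (hgW (x m)).1
  set δ : Ordinal.{0} := sSup (Set.range fun n => (x n).1) with hδdef
  have hrsub : (Set.range fun n => (x n).1) ⊆ Set.Iio κ := by
    rintro _ ⟨n, rfl⟩; exact (x n).2
  have hbdd := bddAbove_of_subset_Iio hrsub
  have hle : ∀ n, (x n).1 ≤ δ := fun n => le_csSup hbdd ⟨n, rfl⟩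
  have hδκ : δ < κ := by
    refine sSup_lt_of_card_lt hrsub ?_
    have hcnt : #(Set.range fun n => (x n).1) ≤ Cardinal.aleph0 := by
      have := (Set.countable_range fun n => (x n).1).to_subtype
      exact Cardinal.mk_le_aleph0
    have h2 : (Cardinal.aleph0 : Cardinal.{1}) < Cardinal.lift.{1} κ.cof := by
      rw [← Cardinal.lift_aleph0.{1,0}]
      exact Cardinal.lift_lt.mpr hκ
    exact hcnt.trans_lt h2
  have hαδ : α < δ := hx0.trans_le (hle 0)
  have hδpos : 0 < δ := lt_of_le_of_lt (zero_le : (0 : Ordinal.{0}) ≤ α) hαδ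
  refine ⟨δ, ⟨hδκ, hδpos, ?_⟩, hαδ⟩
  · refine sSup_eq_of_unb (Set.inter_subset_right) hδpos ?_
    intro b hb
    have : ∃ n, b < (x n).1 := by
      by_contra hcon
      push_neg at hcon
      exact absurd (csSup_le ⟨(x 0).1, Set.mem_range_self 0⟩ (by rintro _ ⟨n, rfl⟩; exact hcon n)) (not_le.2 hb)
    obtain ⟨n, hn⟩ := this
    exact ⟨(x n).1, ⟨hxW n, (hxsucc n).trans_le (hle (n+1))⟩, hn⟩

lemma accIn_isLimit {W : Set Ordinal.{0}} {κ δ : Ordinal.{0}}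
    (h : δ ∈ AccIn W κ) : Order.IsSuccLimit δ := by
  refine Ordinal.isSuccLimit_iff.2 ⟨h.2.1.ne', Order.isSuccPrelimit_of_succ_lt ?_⟩
  intro b hb
  obtain ⟨x, -, hbx, hxδ⟩ := accIn_unb h b hb
  exact lt_of_le_of_lt (Order.succ_le_of_lt hbx) hxδ

lemma isClubIn_AccIn {W : Set Ordinal.{0}} {κ : Ordinal.{0}}
    (hκ : Cardinal.aleph0 < κ.cof) (hWsub : W ⊆ Set.Iio κ)
    (hW : ∀ b < κ, ∃ x ∈ W, b < x) : IsClubIn (AccIn W κ) κ := by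
  refine ⟨fun δ hδ => hδ.1, ?_, ?_⟩
  · intro α hα
    obtain ⟨δ, hδ, hαδ⟩ := exists_omega_lim hκ hWsub hW hα
    exact ⟨δ, hδ, hαδ.le⟩
  · intro s hs hne hlt
    by_cases hmem : sSup s ∈ s
    · exact hs hmem
    set σ := sSup s with hσ
    obtain ⟨δ0, hδ0⟩ := id hne
    have hbdd : BddAbove s := ⟨σ, fun x hx => le_csSup (bddAbove_of_subset_Iio
      (fun y hy => (hs hy).1)) hx⟩
    have hle : ∀ x ∈ s, x ≤ σ := fun x hx =>
      le_csSup (bddAbove_of_subset_Iio (fun y hy => (hs hy).1)) hx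
    have hσpos : 0 < σ := lt_of_lt_of_le (hs hδ0).2.1 (hle δ0 hδ0)
    refine ⟨hlt, hσpos, sSup_eq_of_unb Set.inter_subset_right hσpos ?_⟩
    intro b hb
    have hex : ∃ x ∈ s, b < x := by
      by_contra hcon
      push_neg at hcon
      exact absurd (csSup_le hne hcon) (not_le.2 hb)
    obtain ⟨δ, hδs, hbδ⟩ := hex
    have hδpos : 0 < δ := lt_of_le_of_lt (zero_le : (0 : Ordinal.{0}) ≤ b) hbδ
    obtain ⟨y, hy, hby, hyδ⟩ := accIn_unb (hs hδs) b hbδ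
    exact ⟨y, ⟨hy, hyδ.trans_le (hle δ hδs)⟩, hby⟩

lemma accIn_subset_club {C : Set Ordinal.{0}} {κ : Ordinal.{0}}
    (hC : IsClubIn C κ) : AccIn C κ ⊆ C := by
  rintro δ ⟨hδκ, hδpos, hδsup⟩
  have hne : (C ∩ Set.Iio δ).Nonempty := by
    obtain ⟨x, hx, -⟩ := unb_of_sSup_eq Set.inter_subset_right hδpos hδsup 0 hδpos
    exact ⟨x, hx⟩
  have hlt' : sSup (C ∩ Set.Iio δ) < κ := by rw [hδsup]; exact hδκ
  have := hC.2.2 (C ∩ Set.Iio δ) Set.inter_subset_left hne hlt'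
  rwa [hδsup] at this

lemma isClubIn_inter {C D : Set Ordinal.{0}} {κ : Ordinal.{0}}
    (hκ : Cardinal.aleph0 < κ.cof)
    (hC : IsClubIn C κ) (hD : IsClubIn D κ) : IsClubIn (C ∩ D) κ := by
  have hκlim : Order.IsSuccLimit κ := Ordinal.aleph0_le_cof.1 hκ.le
  have hCunb : ∀ b < κ, ∃ x ∈ C, b < x ∧ x < κ := by
    intro b hb
    obtain ⟨x, hx, hbx⟩ := hC.2.1 (Order.succ b) (hκlim.succ_lt hb)
    exact ⟨x, hx, (Order.lt_succ b).trans_le hbx, hC.1 hx⟩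
  have hDunb : ∀ b < κ, ∃ x ∈ D, b < x ∧ x < κ := by
    intro b hb
    obtain ⟨x, hx, hbx⟩ := hD.2.1 (Order.succ b) (hκlim.succ_lt hb)
    exact ⟨x, hx, (Order.lt_succ b).trans_le hbx, hD.1 hx⟩
  refine ⟨fun x hx => hC.1 hx.1, ?_, ?_⟩
  · -- unboundedness by interleaving
    intro α hα
    have stepC : ∀ b : {b : Ordinal.{0} // b < κ}, ∃ x, x ∈ C ∧ b.1 < x ∧ x < κ := by
      rintro ⟨b, hb⟩; obtain ⟨x, h1, h2, h3⟩ := hCunb b hb; exact ⟨x, h1, h2, h3⟩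
    have stepD : ∀ b : {b : Ordinal.{0} // b < κ}, ∃ x, x ∈ D ∧ b.1 < x ∧ x < κ := by
      rintro ⟨b, hb⟩; obtain ⟨x, h1, h2, h3⟩ := hDunb b hb; exact ⟨x, h1, h2, h3⟩
    set gC : {b : Ordinal.{0} // b < κ} → {b : Ordinal.{0} // b < κ} :=
      fun b => ⟨(stepC b).choose, (stepC b).choose_spec.2.2⟩ with hgC
    set gD : {b : Ordinal.{0} // b < κ} → {b : Ordinal.{0} // b < κ} :=
      fun b => ⟨(stepD b).choose, (stepD b).choose_spec.2.2⟩ with hgD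
    have hgCp : ∀ b, (gC b).1 ∈ C ∧ b.1 < (gC b).1 := fun b =>
      ⟨(stepC b).choose_spec.1, (stepC b).choose_spec.2.1⟩
    have hgDp : ∀ b, (gD b).1 ∈ D ∧ b.1 < (gD b).1 := fun b =>
      ⟨(stepD b).choose_spec.1, (stepD b).choose_spec.2.1⟩
    set x : ℕ → {b : Ordinal.{0} // b < κ} :=
      fun n => Nat.rec ⟨α, hα⟩ (fun _ ih => gD (gC ih)) n with hxdef
    have hstep : ∀ n, (x n).1 < (gC (x n)).1 ∧ (gC (x n)).1 < (x (n+1)).1 := by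
      intro n
      exact ⟨(hgCp (x n)).2, (hgDp (gC (x n))).2⟩
    have hmono : ∀ n, (x n).1 < (x (n+1)).1 := fun n => ((hstep n).1).trans (hstep n).2
    set δ : Ordinal.{0} := sSup (Set.range fun n => (x (n+1)).1) with hδ
    have hrsub : (Set.range fun n => (x (n+1)).1) ⊆ Set.Iio κ := by
      rintro _ ⟨n, rfl⟩; exact (x (n+1)).2
    have hbdd := bddAbove_of_subset_Iio hrsub
    have hle : ∀ n, (x (n+1)).1 ≤ δ := fun n => le_csSup hbdd ⟨n, rfl⟩
    have hδκ : δ < κ := by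
      refine sSup_lt_of_card_lt hrsub ?_
      have hcnt : #(Set.range fun n => (x (n+1)).1) ≤ Cardinal.aleph0 := by
        have := (Set.countable_range fun n => (x (n+1)).1).to_subtype
        exact Cardinal.mk_le_aleph0
      have h2 : (Cardinal.aleph0 : Cardinal.{1}) < Cardinal.lift.{1} κ.cof := by
        rw [← Cardinal.lift_aleph0.{1,0}]
        exact Cardinal.lift_lt.mpr hκ
      exact hcnt.trans_lt h2
    -- δ ∈ D
    have hδD : δ ∈ D := by
      have := hD.2.2 (Set.range fun n => (x (n+1)).1) ?_ ⟨(x 1).1, ⟨0, rfl⟩⟩ hδκ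
      · exact this
      · rintro _ ⟨n, rfl⟩
        cases n with
        | zero => exact (hgDp (gC (x 0))).1
        | succ m => exact (hgDp (gC (x (m+1)))).1
    -- δ ∈ C
    have hδC : δ ∈ C := by
      have hCsub : (Set.range fun n => (gC (x n)).1) ⊆ C := by
        rintro _ ⟨n, rfl⟩; exact (hgCp (x n)).1
      have hbddC : BddAbove (Set.range fun n => (gC (x n)).1) :=
        bddAbove_of_subset_Iio (fun y hy => (hC.1 (hCsub hy)))
      have heq : sSup (Set.range fun n => (gC (x n)).1) = δ := by
        apply le_antisymm
        · refine csSup_le ⟨(gC (x 0)).1, ⟨0, rfl⟩⟩ ?_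
          rintro _ ⟨n, rfl⟩
          exact ((hstep n).2.le).trans (hle n)
        · refine csSup_le ⟨(x 1).1, ⟨0, rfl⟩⟩ ?_
          rintro _ ⟨n, rfl⟩
          exact ((hstep (n+1)).1.le).trans (le_csSup hbddC ⟨n+1, rfl⟩)
      have := hC.2.2 _ hCsub ⟨(gC (x 0)).1, ⟨0, rfl⟩⟩ (heq ▸ hδκ)
      rwa [heq] at this
    have hαδ : α ≤ δ := ((hmono 0).le).trans (hle 0)
    exact ⟨δ, ⟨hδC, hδD⟩, hαδ⟩
  · intro s hs hne hlt
    exact ⟨hC.2.2 s (fun y hy => (hs hy).1) hne hlt,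
           hD.2.2 s (fun y hy => (hs hy).2) hne hlt⟩

lemma isClubIn_relativize {D : Set Ordinal.{0}} {γ κ : Ordinal.{0}}
    (hγκ : γ < κ) (hγpos : 0 < γ) (hD : IsClubIn D κ)
    (hacc : sSup (D ∩ Set.Iio γ) = γ) : IsClubIn (D ∩ Set.Iio γ) γ := by
  refine ⟨Set.inter_subset_right, ?_, ?_⟩
  · intro α hα
    obtain ⟨x, hx, hαx⟩ := unb_of_sSup_eq Set.inter_subset_right hγpos hacc α hα
    exact ⟨x, hx, hαx.le⟩
  · intro s hs hne hlt
    refine ⟨hD.2.2 s (fun y hy => (hs hy).1) hne (hlt.trans hγκ), hlt⟩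

lemma stationary_unbounded {P : Set Ordinal.{0}} {γ : Ordinal.{0}}
    (hγlim : Order.IsSuccLimit γ) (hP : IsStationaryIn P γ) :
    ∀ b < γ, ∃ x ∈ P, b < x ∧ x < γ := by
  intro b hb
  have hclub : IsClubIn {x | b < x ∧ x < γ} γ := by
    refine ⟨fun x hx => hx.2, ?_, ?_⟩
    · intro α hα
      refine ⟨max α (Order.succ b), ⟨?_, ?_⟩, le_max_left _ _⟩
      · exact lt_of_lt_of_le (Order.lt_succ b) (le_max_right _ _)
      · exact max_lt hα (hγlim.succ_lt hb)
    · intro s hs hne hlt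
      obtain ⟨y, hy⟩ := hne
      exact ⟨lt_of_lt_of_le (hs hy).1 (le_csSup (bddAbove_of_subset_Iio
        (fun z hz => (hs hz).2)) hy), hlt⟩
  obtain ⟨x, hxP, hx⟩ := hP _ hclub
  exact ⟨x, hxP, hx.1, hx.2⟩


theorem stmt10 (lam : Cardinal.{0}) (hinf : Cardinal.aleph0 ≤ lam)
    (hsing : cofC lam < lam)
    (S : Set Ordinal.{0}) (hSsub : S ⊆ Set.Iio (succOrd lam))
    (hstat : IsStationaryIn S (succOrd lam))
    (h : ∃ T, InIdealISL lam S T ∧ IsStationaryIn T (succOrd lam)) :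
    ClubMinus lam S := by
  classical
  obtain ⟨T, ⟨hTsub, d, hdlt, hdsub, hdnorm, C, hCclub, hCprop⟩, hTstat⟩ := h
  set κ := succOrd lam with hκdef
  set θ := (cofC lam).ord with hθdef
  have hsuccreg : (Order.succ lam).IsRegular := Cardinal.isRegular_succ hinf
  have hκcof : κ.cof = Order.succ lam := hsuccreg.cof_eq
  have hκcof_big : Cardinal.aleph0 < κ.cof := by
    rw [hκcof]; exact hinf.trans_lt (Order.lt_succ lam)
  have hκlim : Order.IsSuccLimit κ := Ordinal.aleph0_le_cof.1 hκcof_big.le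
  have hcof_aleph0 : Cardinal.aleph0 ≤ cofC lam :=
    Ordinal.aleph0_le_cof.2 (Cardinal.isSuccLimit_ord hinf)
  have hθcof : θ.cof = cofC lam := Ordinal.cof_cof lam.ord
  have hθcard : θ.card = cofC lam := Cardinal.card_ord _
  have hθpos : 0 < θ := by
    have h1 : Cardinal.aleph0.ord ≤ θ := Cardinal.ord_le_ord.2 hcof_aleph0
    have h2 : (0 : Ordinal.{0}) < Cardinal.aleph0.ord := by
      rw [Cardinal.ord_aleph0]; exact Ordinal.omega0_pos
    exact h2.trans_le h1
  set A : Ordinal.{0} → Set (Set Ordinal.{0}) :=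
    fun α => (fun i => {β : Ordinal.{0} | β < α ∧ d β α ≤ i}) '' (Set.Iio θ) with hA
  refine ⟨A, ?_, ?_⟩
  · intro α hαS
    constructor
    · rintro X ⟨i, hi, rfl⟩
      exact ⟨fun β hβ => hβ.1, hdnorm i hi α (hSsub hαS)⟩
    · calc #(A α) ≤ #(Set.Iio θ) := Cardinal.mk_image_le
        _ = Cardinal.lift.{1} θ.card := Ordinal.mk_Iio_ordinal θ
        _ ≤ Cardinal.lift.{1} lam := by rw [hθcard]; exact Cardinal.lift_le.2 hsing.le
  · intro Z hZsub hZunb D hDclub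
    have hZunb' : ∀ b < κ, ∃ x ∈ Z, b < x := by
      intro b hb
      obtain ⟨x, hx, hbx⟩ := hZunb (Order.succ b) (hκlim.succ_lt hb)
      exact ⟨x, hx, (Order.lt_succ b).trans_le hbx⟩
    have hDunb' : ∀ b < κ, ∃ x ∈ D, b < x := by
      intro b hb
      obtain ⟨x, hx, hbx⟩ := hDclub.2.1 (Order.succ b) (hκlim.succ_lt hb)
      exact ⟨x, hx, (Order.lt_succ b).trans_le hbx⟩
    have hEclub : IsClubIn (C ∩ (AccIn D κ ∩ AccIn Z κ)) κ :=
      isClubIn_inter hκcof_big hCclub (isClubIn_inter hκcof_big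
        (isClubIn_AccIn hκcof_big hDclub.1 hDunb')
        (isClubIn_AccIn hκcof_big hZsub hZunb'))
    obtain ⟨γ, hγT, hγC, hγaccD, hγaccZ⟩ := hTstat _ hEclub
    obtain ⟨hγκ, hγcof, hγSstat⟩ := hTsub hγT
    have hγlim : Order.IsSuccLimit γ := Ordinal.aleph0_le_cof.1 hγcof.le
    have hγpos : 0 < γ := hγlim.pos
    have hDγclub : IsClubIn (D ∩ Set.Iio γ) γ :=
      isClubIn_relativize hγκ hγpos hDclub hγaccD.2.2
    have hZγunb : ∀ b < γ, ∃ x ∈ Z, b < x ∧ x < γ := accIn_unb hγaccZ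
    have hZγsub : Z ∩ Set.Iio γ ⊆ Set.Iio γ := Set.inter_subset_right
    have hZγunb2 : ∀ b < γ, ∃ x ∈ Z ∩ Set.Iio γ, b < x := by
      intro b hb
      obtain ⟨x, h1, h2, h3⟩ := hZγunb b hb
      exact ⟨x, ⟨h1, h3⟩, h2⟩
    have final : ∀ α, α ∈ S → α ∈ D →
        (∃ i < θ, sSup (Z ∩ {β : Ordinal.{0} | β < α ∧ d β α ≤ i}) = α) →
        ({α | α ∈ S ∧ ∃ X ∈ A α, sSup (Z ∩ X) = α} ∩ D).Nonempty := by
      rintro α hαS hαD ⟨i, hiθ, hsup⟩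
      exact ⟨α, ⟨hαS, ⟨_, ⟨i, hiθ, rfl⟩, hsup⟩⟩, hαD⟩
    by_cases hcase : cofC lam < γ.cof
    · -- Case B : big cofinality, use the hypothesis from I[S;lam]
      obtain ⟨P, hPsub, hPstat, hPbdd⟩ := hCprop γ ⟨hγT, hγC⟩ hcase
      set istar := sSup {x : Ordinal.{0} | ∃ a ∈ P, ∃ b ∈ P, a < b ∧ x = d a b} with histardef
      have histarθ : istar < θ := hPbdd
      have hpairs_sub : {x : Ordinal.{0} | ∃ a ∈ P, ∃ b ∈ P, a < b ∧ x = d a b} ⊆ Set.Iio θ := by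
        rintro x ⟨a, ha, b, hb, hab, rfl⟩
        exact hdlt a b hab (((hPsub hb).2).trans hγκ)
      have hdP : ∀ a b, a ∈ P → b ∈ P → a < b → d a b ≤ istar := by
        intro a b ha hb hab
        exact le_csSup (bddAbove_of_subset_Iio hpairs_sub) ⟨a, ha, b, hb, hab, rfl⟩
      have hPunb : ∀ b < γ, ∃ x ∈ P, b < x ∧ x < γ := stationary_unbounded hγlim hPstat
      have hzex : ∀ β, β < γ → {x : Ordinal.{0} | x ∈ Z ∧ β < x ∧ x < γ}.Nonempty := by
        intro β hβ
        obtain ⟨x, h1, h2, h3⟩ := hZγunb β hβ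
        exact ⟨x, ⟨h1, h2, h3⟩⟩
      set zf : Ordinal.{0} → Ordinal.{0} :=
        fun β => sInf {x : Ordinal.{0} | x ∈ Z ∧ β < x ∧ x < γ} with hzf
      have hzspec : ∀ β, β < γ → zf β ∈ Z ∧ β < zf β ∧ zf β < γ := by
        intro β hβ
        exact csInf_mem (hzex β hβ)
      set bf : Ordinal.{0} → Ordinal.{0} :=
        fun z => sInf {x : Ordinal.{0} | x ∈ P ∧ z < x} with hbf
      have hbspec : ∀ z, z < γ → bf z ∈ P ∧ z < bf z := by
        intro z hz
        obtain ⟨x, hxP, hzx, -⟩ := hPunb z hz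
        have hne : {x : Ordinal.{0} | x ∈ P ∧ z < x}.Nonempty := ⟨x, hxP, hzx⟩
        exact csInf_mem hne
      set jf : Ordinal.{0} → Ordinal.{0} := fun β => d (zf β) (bf (zf β)) with hjf
      have hjθ : ∀ β, β < γ → jf β < θ := by
        intro β hβ
        have hz := hzspec β hβ
        have hb := hbspec (zf β) hz.2.2
        exact hdlt _ _ hb.2 (((hPsub hb.1).2).trans hγκ)
      have hpigeon : ∃ j, j < θ ∧ ∀ b < γ, ∃ β, β ∈ P ∧ b < β ∧ β < γ ∧ jf β ≤ j := by
        by_contra hcon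
        push_neg at hcon
        have hcon' : ∀ j, j < θ → ∃ b, b < γ ∧ ∀ β, β ∈ P → b < β → β < γ → j < jf β := by
          intro j hj
          obtain ⟨b, hb, hball⟩ := hcon j hj
          exact ⟨b, hb, hball⟩
        set F : Ordinal.{0} → Ordinal.{0} :=
          fun j => if hj : j < θ then (hcon' j hj).choose else 0 with hF
        have hFspec : ∀ j (hj : j < θ), F j < γ ∧
            ∀ β, β ∈ P → F j < β → β < γ → j < jf β := by
          intro j hj
          have : F j = (hcon' j hj).choose := by rw [hF]; exact dif_pos hj
          rw [this]
          exact ⟨(hcon' j hj).choose_spec.1, (hcon' j hj).choose_spec.2⟩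
        have himgsub : F '' (Set.Iio θ) ⊆ Set.Iio γ := by
          rintro _ ⟨j, hj, rfl⟩; exact (hFspec j hj).1
        have hcard : #(F '' Set.Iio θ) < Cardinal.lift.{1} γ.cof := by
          calc #(F '' Set.Iio θ) ≤ #(Set.Iio θ) := Cardinal.mk_image_le
            _ = Cardinal.lift.{1} θ.card := Ordinal.mk_Iio_ordinal θ
            _ < Cardinal.lift.{1} γ.cof := by rw [hθcard]; exact Cardinal.lift_lt.2 hcase
        have hσ : sSup (F '' Set.Iio θ) < γ := sSup_lt_of_card_lt himgsub hcard
        obtain ⟨β, hβP, hσβ, hβγ⟩ := hPunb _ hσ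
        have hjβ := hjθ β hβγ
        have hFj := hFspec (jf β) hjβ
        have hFle : F (jf β) ≤ sSup (F '' Set.Iio θ) :=
          le_csSup (bddAbove_of_subset_Iio himgsub) ⟨jf β, hjβ, rfl⟩
        exact lt_irrefl _ (hFj.2 β hβP (hFle.trans_lt hσβ) hβγ)
      obtain ⟨jstar, hjstarθ, hjunb⟩ := hpigeon
      set B : Set Ordinal.{0} := {β | β ∈ P ∧ β < γ ∧ jf β ≤ jstar} with hB
      have hBsub : B ⊆ Set.Iio γ := fun β hβ => hβ.2.1
      have hBunb : ∀ b < γ, ∃ x ∈ B, b < x := by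
        intro b hb
        obtain ⟨β, h1, h2, h3, h4⟩ := hjunb b hb
        exact ⟨β, ⟨h1, h3, h4⟩, h2⟩
      have hGclub : IsClubIn ((D ∩ Set.Iio γ) ∩ (AccIn B γ ∩ AccIn (Z ∩ Set.Iio γ) γ)) γ :=
        isClubIn_inter hγcof hDγclub (isClubIn_inter hγcof
          (isClubIn_AccIn hγcof hBsub hBunb)
          (isClubIn_AccIn hγcof hZγsub hZγunb2))
      obtain ⟨α, hαP, ⟨hαD, hαγmem⟩, hαaccB, hαaccZ⟩ := hPstat _ hGclub
      have hαS : α ∈ S := (hPsub hαP).1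
      have hαγ : α < γ := (hPsub hαP).2
      have hαpos : 0 < α := hαaccB.2.1
      set i : Ordinal.{0} := max istar jstar with hidef
      have hiθ : i < θ := max_lt histarθ hjstarθ
      refine final α hαS hαD ⟨i, hiθ, ?_⟩
      refine sSup_eq_of_unb ?_ hαpos ?_
      · rintro x ⟨-, hx, -⟩; exact hx
      · intro b hb
        obtain ⟨β, hβB, hbβ, hβα⟩ := accIn_unb hαaccB b hb
        have hβγ2 : β < γ := hβB.2.1
        have hz := hzspec β hβγ2
        have hzα : zf β < α := by
          obtain ⟨x, hxZγ, hβx, hxα⟩ := accIn_unb hαaccZ β hβα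
          have hle : zf β ≤ x := csInf_le (OrderBot.bddBelow _) ⟨hxZγ.1, hβx, hxZγ.2⟩
          exact hle.trans_lt hxα
        have hb' := hbspec (zf β) hz.2.2
        have hβ'α : bf (zf β) < α := by
          obtain ⟨β'', hβ''B, hzβ'', hβ''α⟩ := accIn_unb hαaccB (zf β) hzα
          have hle : bf (zf β) ≤ β'' := csInf_le (OrderBot.bddBelow _) ⟨hβ''B.1, hzβ''⟩
          exact hle.trans_lt hβ''α
        have hdz : d (zf β) α ≤ i := by
          have h1 := hdsub (zf β) (bf (zf β)) α hb'.2 hβ'α (hαγ.trans hγκ)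
          have h2 : d (zf β) (bf (zf β)) ≤ jstar := hβB.2.2
          have h3 : d (bf (zf β)) α ≤ istar := hdP _ _ hb'.1 hαP hβ'α
          calc d (zf β) α ≤ max (d (zf β) (bf (zf β))) (d (bf (zf β)) α) := h1
            _ ≤ max jstar istar := max_le_max h2 h3
            _ ≤ i := by rw [hidef]; exact max_le (le_max_right _ _) (le_max_left _ _)
        exact ⟨zf β, ⟨hz.1, hzα, hdz⟩, hbβ.trans hz.2.1⟩
    · -- Case A : small cofinality
      push_neg at hcase
      obtain ⟨f, hf⟩ := Ordinal.exists_fundamental_sequence γ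
      have hνθ : γ.cof.ord ≤ θ := Cardinal.ord_le_ord.2 hcase
      set F : Ordinal.{0} → Ordinal.{0} :=
        fun ξ => if h : ξ < γ.cof.ord then f ξ h else 0 with hF
      have hFeq : ∀ ξ (h : ξ < γ.cof.ord), F ξ = f ξ h := by
        intro ξ h; rw [hF]; exact dif_pos h
      have hFlt : ∀ ξ, ξ < γ.cof.ord → F ξ < γ := by
        intro ξ h
        rw [hFeq ξ h, ← hf.blsub_eq]
        exact Ordinal.lt_blsub _ ξ h
      have hFmono : ∀ ξ ξ', ξ < ξ' → ξ' < γ.cof.ord → F ξ < F ξ' := by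
        intro ξ ξ' hlt h'
        rw [hFeq ξ (hlt.trans h'), hFeq ξ' h']
        exact hf.2.1 _ _ hlt
      set cR : Set Ordinal.{0} := F '' (Set.Iio γ.cof.ord) with hcR
      have hcsub : cR ⊆ Set.Iio γ := by
        rintro _ ⟨ξ, hξ, rfl⟩; exact hFlt ξ hξ
      have hcunb : ∀ b < γ, ∃ x ∈ cR, b < x := by
        intro b hb
        have hb1 : Order.succ b < γ := hγlim.succ_lt hb
        rw [← hf.blsub_eq] at hb1
        obtain ⟨ξ, hξ, hle⟩ := Ordinal.lt_blsub_iff.1 hb1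
        exact ⟨F ξ, ⟨ξ, hξ, rfl⟩, (Order.lt_succ b).trans_le (by rw [hFeq ξ hξ]; exact hle)⟩
      have hGclub : IsClubIn ((D ∩ Set.Iio γ) ∩ (AccIn cR γ ∩ AccIn (Z ∩ Set.Iio γ) γ)) γ :=
        isClubIn_inter hγcof hDγclub (isClubIn_inter hγcof
          (isClubIn_AccIn hγcof hcsub hcunb)
          (isClubIn_AccIn hγcof hZγsub hZγunb2))
      obtain ⟨α, ⟨hαS, hαγ⟩, ⟨hαD, hαγmem⟩, hαaccC, hαaccZ⟩ := hγSstat _ hGclub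
      have hαpos : 0 < α := hαaccC.2.1
      have hακ : α < κ := hαγ.trans hγκ
      -- cofinality of α is < cofC lam
      have hαcof : α.cof < cofC lam := by
        have hKne : {ξ : Ordinal.{0} | ξ < γ.cof.ord ∧ α ≤ F ξ}.Nonempty := by
          by_contra hk
          have hall : ∀ ξ (hξ : ξ < γ.cof.ord), f ξ hξ < α := by
            intro ξ hξ
            by_contra hge
            exact hk ⟨ξ, hξ, by rw [hFeq ξ hξ]; exact not_lt.1 hge⟩
          have hble : Ordinal.blsub γ.cof.ord f ≤ α := Ordinal.blsub_le hall
          rw [hf.blsub_eq] at hble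
          exact absurd hαγ (not_lt.2 hble)
        set ξ₀ := sInf {ξ : Ordinal.{0} | ξ < γ.cof.ord ∧ α ≤ F ξ} with hξ₀def
        obtain ⟨hξ₀ν, hξ₀ge⟩ := csInf_mem hKne
        have hlow : ∀ ξ, ξ < γ.cof.ord → (F ξ < α ↔ ξ < ξ₀) := by
          intro ξ hξ
          constructor
          · intro hfξ
            by_contra hge
            push_neg at hge
            rcases eq_or_lt_of_le hge with heq | hlt
            · rw [← heq] at hfξ
              exact absurd hfξ (not_lt.2 hξ₀ge)
            · have := hFmono ξ₀ ξ hlt hξ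
              exact absurd hfξ (not_lt.2 (hξ₀ge.trans this.le))
          · intro hlt
            by_contra hge
            have hmem : ξ ∈ {ξ : Ordinal.{0} | ξ < γ.cof.ord ∧ α ≤ F ξ} := ⟨hξ, not_lt.1 hge⟩
            exact absurd (csInf_le (OrderBot.bddBelow _) hmem) (not_le.2 hlt)
        set e : Set.Iio ξ₀ ≃o ξ₀.ToType := Ordinal.ToType.mk with he
        set g : ξ₀.ToType → Ordinal.{0} := fun k => F (e.symm k).1 with hg
        have hξ₀ν' : ξ₀ ≤ γ.cof.ord := hξ₀ν.le
        have hrange : Set.range g = cR ∩ Set.Iio α := by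
          ext x
          constructor
          · rintro ⟨k, rfl⟩
            have hkν : ((e.symm k : Set.Iio ξ₀) : Ordinal.{0}) < γ.cof.ord := (e.symm k).2.trans hξ₀ν
            exact ⟨⟨(e.symm k).1, hkν, rfl⟩, (hlow _ hkν).2 (e.symm k).2⟩
          · rintro ⟨⟨ξ, hξ, rfl⟩, hxα⟩
            have hξξ₀ : ξ < ξ₀ := (hlow ξ hξ).1 hxα
            refine ⟨e ⟨ξ, hξξ₀⟩, ?_⟩
            rw [hg]
            simp only [OrderIso.symm_apply_apply]
        have hsupg : sSup (Set.range g) = α := by rw [hrange]; exact hαaccC.2.2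
        have hiSup : iSup g = α := by rw [← hsupg]; rfl
        have hlt' : ∀ k, g k < α := by
          intro k
          have hkν : ((e.symm k : Set.Iio ξ₀) : Ordinal.{0}) < γ.cof.ord := (e.symm k).2.trans hξ₀ν
          exact (hlow _ hkν).2 (e.symm k).2
        have hcof1 : α.cof ≤ ξ₀.card := by
          rw [← hiSup]
          have h1 : (iSup g).cof ≤ #ξ₀.ToType :=
            Ordinal.cof_iSup_le (fun k => by rw [hiSup]; exact hlt' k)
          rwa [Cardinal.mk_toType] at h1
        have hξ₀θ : ξ₀ < θ := hξ₀ν.trans_le hνθ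
        exact hcof1.trans_lt (Cardinal.lt_ord.1 hξ₀θ)
      have hαlim : Order.IsSuccLimit α := accIn_isLimit hαaccC
      -- build the witness i
      obtain ⟨f2, hf2⟩ := Ordinal.exists_fundamental_sequence α
      set F2 : Ordinal.{0} → Ordinal.{0} :=
        fun ξ => if h : ξ < α.cof.ord then f2 ξ h else 0 with hF2
      have hF2eq : ∀ ξ (h : ξ < α.cof.ord), F2 ξ = f2 ξ h := by
        intro ξ h; rw [hF2]; exact dif_pos h
      have hF2lt : ∀ ξ, ξ < α.cof.ord → F2 ξ < α := by
        intro ξ h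
        rw [hF2eq ξ h, ← hf2.blsub_eq]
        exact Ordinal.lt_blsub _ ξ h
      have hwex : ∀ ξ (h : ξ < α.cof.ord), ∃ x, x ∈ Z ∧ F2 ξ < x ∧ x < α := by
        intro ξ h
        obtain ⟨x, hxZγ, h1, h2⟩ := accIn_unb hαaccZ (F2 ξ) (hF2lt ξ h)
        exact ⟨x, hxZγ.1, h1, h2⟩
      set W : Ordinal.{0} → Ordinal.{0} :=
        fun ξ => if h : ξ < α.cof.ord then (hwex ξ h).choose else 0 with hW
      have hWspec : ∀ ξ (h : ξ < α.cof.ord), W ξ ∈ Z ∧ F2 ξ < W ξ ∧ W ξ < α := by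
        intro ξ h
        have : W ξ = (hwex ξ h).choose := by rw [hW]; exact dif_pos h
        rw [this]
        exact (hwex ξ h).choose_spec
      set dvals : Set Ordinal.{0} := (fun ξ => d (W ξ) α) '' Set.Iio α.cof.ord with hdvals
      have hdvals_sub : dvals ⊆ Set.Iio θ := by
        rintro _ ⟨ξ, hξ, rfl⟩
        exact hdlt _ _ (hWspec ξ hξ).2.2 hακ
      set i := sSup dvals with hidef
      have hiθ : i < θ := by
        refine sSup_lt_of_card_lt hdvals_sub ?_
        calc #dvals ≤ #(Set.Iio α.cof.ord) := Cardinal.mk_image_le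
          _ = Cardinal.lift.{1} α.cof.ord.card := Ordinal.mk_Iio_ordinal α.cof.ord
          _ < Cardinal.lift.{1} θ.cof := by
              rw [hθcof, Cardinal.card_ord]
              exact Cardinal.lift_lt.2 hαcof
      refine final α hαS hαD ⟨i, hiθ, ?_⟩
      refine sSup_eq_of_unb ?_ hαpos ?_
      · rintro x ⟨-, hx, -⟩; exact hx
      · intro b hb
        have hb1 : Order.succ b < α := hαlim.succ_lt hb
        rw [← hf2.blsub_eq] at hb1
        obtain ⟨ξ, hξ, hle⟩ := Ordinal.lt_blsub_iff.1 hb1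
        have hw := hWspec ξ hξ
        have hdw : d (W ξ) α ≤ i :=
          le_csSup (bddAbove_of_subset_Iio hdvals_sub) ⟨ξ, hξ, rfl⟩
        have hbw : b < W ξ := by
          have : b < F2 ξ := by
            rw [hF2eq ξ hξ]
            exact (Order.lt_succ b).trans_le hle
          exact this.trans hw.2.1
        exact ⟨W ξ, ⟨hw.1, hw.2.2, hdw⟩, hbw⟩

end DiamondSurvey
end
end

section
/- Let λ be an infinite cardinal and let S ⊆ λ⁺ be stationary. If Φ_S holds, then no ladder system on S has the uniformization property. -/
noncomputable section

namespace DiamondSurvey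

open Cardinal

theorem stmt15 (lam : Cardinal.{0}) (hinf : Cardinal.aleph0 ≤ lam)
    (S : Set Ordinal.{0}) (hSsub : S ⊆ Set.Iio (succOrd lam))
    (hstat : IsStationaryIn S (succOrd lam))
    (hwd : WeakDiamond lam S) :
    ∀ L : Ordinal.{0} → Set Ordinal.{0}, IsLadderSystem S L →
      ¬ HasUniformization S L := by
  classical
  intro L hL hU
  set κ := succOrd lam with hκ
  have hκinf : Cardinal.aleph0 ≤ Order.succ lam := hinf.trans (Order.le_succ lam)
  -- the club of limit ordinals below κ
  have hclub : IsClubIn {α | α < κ ∧ Order.IsSuccLimit α} κ := by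
    refine ⟨fun α hα => hα.1, ?_, ?_⟩
    · intro α hα
      refine ⟨α + Ordinal.omega0, ⟨?_, Ordinal.isSuccLimit_add α Ordinal.isSuccLimit_omega0⟩,
        le_self_add⟩
      rw [hκ, succOrd, Cardinal.lt_ord, Ordinal.card_add, Ordinal.card_omega0]
      exact Cardinal.add_lt_of_lt hκinf (Cardinal.lt_ord.1 hα)
        (lt_of_le_of_lt hinf (Order.lt_succ lam))
    · intro s hs hne hlt
      have hbdd : BddAbove s := ⟨κ, fun x hx => le_of_lt (hs hx).1⟩
      refine ⟨hlt, Ordinal.isSuccLimit_iff.2 ⟨?_, Order.isSuccPrelimit_of_succ_lt ?_⟩⟩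
      · obtain ⟨x, hx⟩ := hne
        have h0 : (0 : Ordinal) < x := Order.IsSuccLimit.pos (hs hx).2
        exact ne_of_gt (lt_of_lt_of_le h0 (le_csSup hbdd hx))
      · intro a ha
        obtain ⟨x, hxs, hax⟩ := (lt_csSup_iff hbdd hne).1 ha
        have : Order.succ a < x := (hs hxs).2.succ_lt hax
        exact lt_of_lt_of_le this (le_csSup hbdd hxs)
  -- the weak diamond applied to the "eventual value" function
  obtain ⟨g, hg⟩ := hwd (fun α f =>
    decide (∃ γ, γ < α ∧ ∀ β, ∀ h : β < α, β ∈ L α → γ < β → f ⟨β, h⟩ = true))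
  -- uniformize the coloring c α β = !(g α)
  obtain ⟨f, hf⟩ := hU (fun α _ => !(g α))
  obtain ⟨α, hαT, hακ, hαlim⟩ := hg f _ hclub
  obtain ⟨hαS, hFg⟩ := hαT
  -- properties of the ladder at α
  obtain ⟨hLsub, hLsup, -⟩ := hL α hαS
  have hub : ∀ δ < α, ∃ β ∈ L α, δ < β := by
    intro δ hδ
    by_contra h
    push_neg at h
    have : sSup (L α) ≤ δ := csSup_le' h
    rw [hLsup] at this
    exact absurd (lt_of_le_of_lt this hδ) (lt_irrefl α)
  -- the deviation set is bounded below α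
  have hdev := hf α hαS hαlim
  set δ := sSup {β | β ∈ L α ∧ (!(g α)) ≠ f β} with hδdef
  have hbdddev : BddAbove {β | β ∈ L α ∧ (!(g α)) ≠ f β} :=
    ⟨α, fun x hx => le_of_lt (hLsub hx.1)⟩
  have hev : ∀ β ∈ L α, δ < β → f β = !(g α) := by
    intro β hβ hδβ
    by_contra hne
    have : β ∈ {β | β ∈ L α ∧ (!(g α)) ≠ f β} := ⟨hβ, fun h => hne h.symm⟩
    exact absurd (le_csSup hbdddev this) (not_le.2 hδβ)
  -- now derive the contradiction from hFg
  simp only at hFg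
  cases hgα : g α with
  | false =>
    -- f is eventually true on L α, so the decide is true, contradicting g α = false
    have : ∃ γ, γ < α ∧ ∀ β, ∀ h : β < α, β ∈ L α → γ < β → f β = true := by
      refine ⟨δ, hdev, fun β _ hβ hδβ => ?_⟩
      have := hev β hβ hδβ
      rw [hgα] at this
      simpa using this
    rw [hgα] at hFg
    simp only [decide_eq_false_iff_not] at hFg
    exact hFg this
  | true =>
    -- f is eventually false on L α, so the decide is false
    rw [hgα] at hFg
    simp only [decide_eq_true_eq] at hFg
    obtain ⟨γ, hγα, hγ⟩ := hFg
    obtain ⟨β, hβL, hβgt⟩ := hub (max γ δ) (max_lt hγα hdev)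
    have h1 : f β = true := hγ β (hLsub hβL) hβL (lt_of_le_of_lt (le_max_left γ δ) hβgt)
    have h2 : f β = !(g α) := hev β hβL (lt_of_le_of_lt (le_max_right γ δ) hβgt)
    rw [hgα] at h2
    simp [h1] at h2

end DiamondSurvey
end
end
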